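/- arXiv:1011.6546 — 3 statements merged into one kernel-verified Lean document; each statement's English description precedes it below -/
import Mathlib

section
/- Let q ∈ (0,1), let l₀ ∈ ℝ, let ε₀, c₀, η, C > 0 and 0 < α₀ ≤ α₁. For each l ≥ l₀ suppose given functions on D := [−ε₀, ε₀] × [−ε₀, ε₀]: (i) F(l, ·, ·) : D → ℝ, C¹, with |∂F/∂ψ(l, ψ, λ)| ≤ q, |∂F/∂λ(l, ψ, λ)| ≤ C, and |F(l, 0, 0)| ≤ C e^{−η l}; (ii) M(l, ·, ·) : D → ℝ, C¹, with c₀ ≤ |M(l, ψ, λ)| ≤ C and |∂M/∂ψ| + |∂M/∂λ| ≤ C; (iii) a number a(l) with 1/C ≤ a(l) ≤ C; (iv) α(l, ·, ·) : D → [α₀, α₁], C¹, with |∂α/∂ψ| + |∂α/∂λ| ≤ C; (v) a number r(l) with |r(l)| ≤ C e^{−η l}. Then there exist l₁ ≥ l₀, η' > 0 and C' > 0 such that for every l ≥ l₁ the system of equations ψ = F(l, ψ, λ) and a(l) e^{−2α(l, ψ, λ) l}(1 + r(l)) = λ · M(l, ψ, λ) has exactly one solution (ψ*(l), λ*(l))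 ∈ D, and it satisfies |λ*(l) − (a(l)/M(l, 0, 0)) e^{−2α(l, 0, 0) l}| ≤ C' e^{−2α(l, 0, 0) l} e^{−η' l} and |ψ*(l)| ≤ C' e^{−η' l}. -/
open Set Real

lemma aux_exp_lip (x y m : ℝ) (hx : x ≤ m) (hy : y ≤ m) :
    |Real.exp x - Real.exp y| ≤ Real.exp m * |x - y| := by
  wlog h : y ≤ x generalizing x y
  · have := this y x hy hx (le_of_not_ge h)
    rwa [show |y - x| = |x - y| from abs_sub_comm y x,
      show |rexp y - rexp x| = |rexp x - rexp y| from abs_sub_comm _ _] at this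
  rw [abs_of_nonneg (sub_nonneg.2 (Real.exp_le_exp.2 h)), abs_of_nonneg (sub_nonneg.2 h)]
  have h1 : Real.exp y = Real.exp x * Real.exp (y - x) := by
    rw [← Real.exp_add]; ring_nf
  rw [h1]
  have h2 : 1 - Real.exp (y - x) ≤ x - y := by
    have := Real.add_one_le_exp (y - x)
    linarith
  calc Real.exp x - Real.exp x * Real.exp (y - x)
      = Real.exp x * (1 - Real.exp (y - x)) := by ring
    _ ≤ Real.exp m * (x - y) := by
        apply mul_le_mul (Real.exp_le_exp.2 hx) h2 ?_ (Real.exp_pos m).le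
        have h3 : Real.exp (y - x) ≤ 1 := Real.exp_le_one_iff.2 (by linarith)
        linarith

lemma aux_lip2 {ε₀ q1 q2 : ℝ} (f fx fy : ℝ → ℝ → ℝ)
    (h : ∀ x ∈ Icc (-ε₀) ε₀, ∀ y ∈ Icc (-ε₀) ε₀,
      HasDerivAt (fun x' => f x' y) (fx x y) x ∧ HasDerivAt (fun y' => f x y') (fy x y) y ∧
      |fx x y| ≤ q1 ∧ |fy x y| ≤ q2) :
    ∀ x ∈ Icc (-ε₀) ε₀, ∀ x' ∈ Icc (-ε₀) ε₀, ∀ y ∈ Icc (-ε₀) ε₀, ∀ y' ∈ Icc (-ε₀) ε₀,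
      |f x y - f x' y'| ≤ q1 * |x - x'| + q2 * |y - y'| := by
  intro x hx x' hx' y hy y' hy'
  have h1 : |f x y - f x' y| ≤ q1 * |x - x'| := by
    have := Convex.norm_image_sub_le_of_norm_hasDerivWithin_le
      (f := fun t => f t y) (f' := fun t => fx t y) (s := Icc (-ε₀) ε₀)
      (fun t ht => ((h t ht y hy).1).hasDerivWithinAt)
      (fun t ht => (h t ht y hy).2.2.1) (convex_Icc _ _) hx' hx
    simpa [Real.norm_eq_abs] using this
  have h2 : |f x' y - f x' y'| ≤ q2 * |y - y'| := by
    have := Convex.norm_image_sub_le_of_norm_hasDerivWithin_le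
      (f := fun t => f x' t) (f' := fun t => fy x' t) (s := Icc (-ε₀) ε₀)
      (fun t ht => ((h x' hx' t ht).2.1).hasDerivWithinAt)
      (fun t ht => (h x' hx' t ht).2.2.2) (convex_Icc _ _) hy' hy
    simpa [Real.norm_eq_abs] using this
  calc |f x y - f x' y'| ≤ |f x y - f x' y| + |f x' y - f x' y'| := abs_sub_le _ _ _
    _ ≤ q1 * |x - x'| + q2 * |y - y'| := add_le_add h1 h2

lemma aux_fixed {ε₀ : ℝ} (hε : 0 < ε₀) (κ : NNReal) (hκ : κ < 1) (Φ : ℝ × ℝ → ℝ × ℝ)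
    (hmap : ∀ p ∈ (Icc (-ε₀) ε₀ ×ˢ Icc (-ε₀) ε₀ : Set (ℝ × ℝ)), Φ p ∈ (Icc (-ε₀) ε₀ ×ˢ Icc (-ε₀) ε₀ : Set (ℝ × ℝ)))
    (hlip : ∀ p ∈ (Icc (-ε₀) ε₀ ×ˢ Icc (-ε₀) ε₀ : Set (ℝ × ℝ)),
      ∀ p' ∈ (Icc (-ε₀) ε₀ ×ˢ Icc (-ε₀) ε₀ : Set (ℝ × ℝ)), dist (Φ p) (Φ p') ≤ κ * dist p p') :
    ∃ p ∈ (Icc (-ε₀) ε₀ ×ˢ Icc (-ε₀) ε₀ : Set (ℝ × ℝ)), Φ p = p ∧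
      ∀ p' ∈ (Icc (-ε₀) ε₀ ×ˢ Icc (-ε₀) ε₀ : Set (ℝ × ℝ)), Φ p' = p' → p' = p := by
  set D : Set (ℝ × ℝ) := Icc (-ε₀) ε₀ ×ˢ Icc (-ε₀) ε₀ with hD
  haveI : CompleteSpace D := (IsClosed.prod isClosed_Icc isClosed_Icc).completeSpace_coe
  have h0 : (0:ℝ) ∈ Icc (-ε₀) ε₀ := ⟨by linarith, by linarith⟩
  haveI : Nonempty D := ⟨⟨(0, 0), ⟨h0, h0⟩⟩⟩
  set f : D → D := fun p => ⟨Φ p, hmap p p.2⟩ with hf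
  have hcw : ContractingWith κ f := ⟨hκ, LipschitzWith.of_dist_le_mul fun p p' => by
    simpa [hf, Subtype.dist_eq] using hlip p p.2 p' p'.2⟩
  refine ⟨(hcw.fixedPoint f).1, (hcw.fixedPoint f).2, ?_, ?_⟩
  · have h := hcw.fixedPoint_isFixedPt
    exact congrArg Subtype.val h
  · intro p' hp' hfix
    have : (⟨p', hp'⟩ : D) = hcw.fixedPoint f := hcw.fixedPoint_unique (Subtype.ext hfix)
    exact congrArg Subtype.val this


set_option maxHeartbeats 4000000 in
/-- Unique solvability of the coupled system `ψ = F(l,ψ,λ)`,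
`a(l) e^{−2α(l,ψ,λ) l}(1 + r(l)) = λ·M(l,ψ,λ)` near the origin, with exponential leading-order
formula for `λ*(l)` and exponentially small `ψ*(l)`. -/
theorem stmt_3 (q l₀ ε₀ c₀ η C α₀ α₁ : ℝ)
    (hq : q ∈ Set.Ioo (0:ℝ) 1) (hε₀ : 0 < ε₀) (hc₀ : 0 < c₀) (hη : 0 < η) (hC : 0 < C)
    (hα₀ : 0 < α₀) (hαα : α₀ ≤ α₁)
    (F M α : ℝ → ℝ → ℝ → ℝ)
    (Fψ Fl Mψ Ml αψ αl : ℝ → ℝ → ℝ → ℝ)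
    (a r : ℝ → ℝ)
    (hF : ∀ l ≥ l₀, ∀ ψ ∈ Set.Icc (-ε₀) ε₀, ∀ μ ∈ Set.Icc (-ε₀) ε₀,
      HasDerivAt (fun x => F l x μ) (Fψ l ψ μ) ψ ∧
      HasDerivAt (fun y => F l ψ y) (Fl l ψ μ) μ ∧
      |Fψ l ψ μ| ≤ q ∧ |Fl l ψ μ| ≤ C)
    (hF0 : ∀ l ≥ l₀, |F l 0 0| ≤ C * Real.exp (-η * l))
    (hM : ∀ l ≥ l₀, ∀ ψ ∈ Set.Icc (-ε₀) ε₀, ∀ μ ∈ Set.Icc (-ε₀) ε₀,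
      HasDerivAt (fun x => M l x μ) (Mψ l ψ μ) ψ ∧
      HasDerivAt (fun y => M l ψ y) (Ml l ψ μ) μ ∧
      c₀ ≤ |M l ψ μ| ∧ |M l ψ μ| ≤ C ∧ |Mψ l ψ μ| + |Ml l ψ μ| ≤ C)
    (ha : ∀ l ≥ l₀, 1 / C ≤ a l ∧ a l ≤ C)
    (hα : ∀ l ≥ l₀, ∀ ψ ∈ Set.Icc (-ε₀) ε₀, ∀ μ ∈ Set.Icc (-ε₀) ε₀,
      HasDerivAt (fun x => α l x μ) (αψ l ψ μ) ψ ∧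
      HasDerivAt (fun y => α l ψ y) (αl l ψ μ) μ ∧
      α l ψ μ ∈ Set.Icc α₀ α₁ ∧ |αψ l ψ μ| + |αl l ψ μ| ≤ C)
    (hr : ∀ l ≥ l₀, |r l| ≤ C * Real.exp (-η * l)) :
    ∃ l₁ ≥ l₀, ∃ η' > 0, ∃ C' > 0, ∃ ψs μs : ℝ → ℝ,
      ∀ l ≥ l₁,
        (ψs l ∈ Set.Icc (-ε₀) ε₀ ∧ μs l ∈ Set.Icc (-ε₀) ε₀) ∧
        (ψs l = F l (ψs l) (μs l) ∧
          a l * Real.exp (-2 * α l (ψs l) (μs l) * l) * (1 + r l)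
            = μs l * M l (ψs l) (μs l)) ∧
        (∀ ψ ∈ Set.Icc (-ε₀) ε₀, ∀ μ ∈ Set.Icc (-ε₀) ε₀,
          ψ = F l ψ μ →
          a l * Real.exp (-2 * α l ψ μ * l) * (1 + r l) = μ * M l ψ μ →
          ψ = ψs l ∧ μ = μs l) ∧
        |μs l - a l / M l 0 0 * Real.exp (-2 * α l 0 0 * l)| ≤
          C' * Real.exp (-2 * α l 0 0 * l) * Real.exp (-η' * l) ∧
        |ψs l| ≤ C' * Real.exp (-η' * l) := by
  obtain ⟨hq0, hq1⟩ := hq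
  -- constants
  set K : ℝ := max 1 (2 * C / (1 - q)) with hKdef
  have hK1 : (1:ℝ) ≤ K := le_max_left _ _
  have hK0 : (0:ℝ) < K := lt_of_lt_of_le one_pos hK1
  have hCK : C / K ≤ (1 - q) / 2 := by
    have h2C : 2 * C / (1 - q) ≤ K := le_max_right _ _
    rw [div_le_iff₀ (by linarith)] at h2C
    rw [div_le_iff₀ hK0]
    nlinarith
  set η₁ : ℝ := min η (2 * α₀) with hη₁def
  have hη₁0 : 0 < η₁ := lt_min hη (by linarith)
  set η' : ℝ := η₁ / 2 with hη'def
  have hη'0 : 0 < η' := by positivity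
  set B₁ : ℝ := 2 * C / c₀ with hB₁def
  have hB₁0 : 0 < B₁ := by positivity
  set B₂ : ℝ := (C + C * B₁) / (1 - q) with hB₂def
  have hB₂0 : 0 < B₂ := by
    apply div_pos (by positivity) (by linarith)
  set B₃ : ℝ := C * (B₂ + B₁) with hB₃def
  have hB₃0 : 0 < B₃ := by positivity
  set B₄ : ℝ := 4 * B₃ / η₁ with hB₄def
  have hB₄0 : 0 < B₄ := by positivity
  set EE' : ℝ := (2 * C) * ((2 * C) / (α₀ * c₀) + C / c₀ ^ 2) with hEE'def
  have hEE'0 : 0 < EE' := by positivity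
  set C₅ : ℝ := C * (2 * Real.exp 1 * B₄ / c₀ + C / c₀ + B₃ / c₀ ^ 2) with hC₅def
  have hC₅0 : 0 < C₅ := by positivity
  set C' : ℝ := C₅ + B₂ + 1 with hC'def
  have hC'0 : 0 < C' := by positivity
  -- eventual conditions
  have hevent : ∀ A β δ : ℝ, 0 < β → 0 < δ →
      ∀ᶠ l in Filter.atTop, A * Real.exp (-β * l) ≤ δ := by
    intro A β δ hβ hδ
    have h2 : Filter.Tendsto (fun l : ℝ => β * l) Filter.atTop Filter.atTop :=
      Filter.Tendsto.const_mul_atTop hβ Filter.tendsto_id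
    have h3 := (Real.tendsto_exp_neg_atTop_nhds_zero.comp h2).const_mul A
    rw [mul_zero] at h3
    have h5 : Filter.Tendsto (fun l : ℝ => A * Real.exp (-β * l)) Filter.atTop (nhds 0) := by
      simpa [Function.comp, neg_mul] using h3
    exact h5.eventually (eventually_le_nhds hδ)
  have hev : ∀ᶠ l in Filter.atTop, l₀ ≤ l ∧ 1 ≤ l ∧
      C * Real.exp (-η * l) ≤ 1 ∧
      C * Real.exp (-η * l) ≤ (1 - q) / 2 * ε₀ ∧
      K * B₁ * Real.exp (-(2 * α₀) * l) ≤ ε₀ ∧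
      (K + 1) * EE' * Real.exp (-α₀ * l) ≤ (1 + q) / 2 ∧
      B₄ * Real.exp (-η' * l) ≤ 1 := by
    refine (Filter.eventually_ge_atTop l₀).and ((Filter.eventually_ge_atTop 1).and
      ((hevent C η 1 hη one_pos).and ((hevent C η _ hη (by nlinarith)).and
      ((hevent (K * B₁) (2 * α₀) ε₀ (by linarith) hε₀).and
      ((hevent ((K + 1) * EE') α₀ _ hα₀ (by positivity)).and
      (hevent B₄ η' 1 hη'0 one_pos))))))
  obtain ⟨l₁, hl₁⟩ := Filter.eventually_atTop.1 hev
  -- the main per-l construction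
  have main : ∀ l ≥ max l₁ l₀, ∃ p : ℝ × ℝ,
      (p.1 ∈ Set.Icc (-ε₀) ε₀ ∧ p.2 ∈ Set.Icc (-ε₀) ε₀) ∧
      (p.1 = F l p.1 p.2 ∧
        a l * Real.exp (-2 * α l p.1 p.2 * l) * (1 + r l) = p.2 * M l p.1 p.2) ∧
      (∀ ψ ∈ Set.Icc (-ε₀) ε₀, ∀ μ ∈ Set.Icc (-ε₀) ε₀,
        ψ = F l ψ μ →
        a l * Real.exp (-2 * α l ψ μ * l) * (1 + r l) = μ * M l ψ μ →
        ψ = p.1 ∧ μ = p.2) ∧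
      |p.2 - a l / M l 0 0 * Real.exp (-2 * α l 0 0 * l)| ≤
        C' * Real.exp (-2 * α l 0 0 * l) * Real.exp (-η' * l) ∧
      |p.1| ≤ C' * Real.exp (-η' * l) := by
    intro l hl
    obtain ⟨hc1, hc2, hc3, hc4, hc5, hc6, hc7⟩ := hl₁ l (le_trans (le_max_left _ _) hl)
    have hll₀ : l₀ ≤ l := hc1
    have hl0 : (0:ℝ) ≤ l := by linarith
    have hc5' : K * B₁ * Real.exp (-2 * α₀ * l) ≤ ε₀ := by
      rwa [show (-2 * α₀ * l : ℝ) = -(2 * α₀) * l by ring]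
    have h0I : (0:ℝ) ∈ Set.Icc (-ε₀) ε₀ := ⟨by linarith, by linarith⟩
    -- Lipschitz bounds
    have hFlip := aux_lip2 (F l) (Fψ l) (Fl l) (fun x hx y hy => hF l hll₀ x hx y hy)
    have hMlip := aux_lip2 (q1 := C) (q2 := C) (M l) (Mψ l) (Ml l) (fun x hx y hy => by
      obtain ⟨h1, h2, _, _, h5⟩ := hM l hll₀ x hx y hy
      exact ⟨h1, h2, by linarith [abs_nonneg (Ml l x y)], by linarith [abs_nonneg (Mψ l x y)]⟩)
    have hαlip := aux_lip2 (q1 := C) (q2 := C) (α l) (αψ l) (αl l) (fun x hx y hy => by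
      obtain ⟨h1, h2, _, h5⟩ := hα l hll₀ x hx y hy
      exact ⟨h1, h2, by linarith [abs_nonneg (αl l x y)], by linarith [abs_nonneg (αψ l x y)]⟩)
    have hMc : ∀ x ∈ Set.Icc (-ε₀) ε₀, ∀ y ∈ Set.Icc (-ε₀) ε₀, c₀ ≤ |M l x y| :=
      fun x hx y hy => (hM l hll₀ x hx y hy).2.2.1
    have hMne : ∀ x ∈ Set.Icc (-ε₀) ε₀, ∀ y ∈ Set.Icc (-ε₀) ε₀, M l x y ≠ 0 := by
      intro x hx y hy h
      have := hMc x hx y hy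
      rw [h, abs_zero] at this; linarith
    have hαm : ∀ x ∈ Set.Icc (-ε₀) ε₀, ∀ y ∈ Set.Icc (-ε₀) ε₀, α₀ ≤ α l x y :=
      fun x hx y hy => ((hα l hll₀ x hx y hy).2.2.1).1
    have hrl : |r l| ≤ C * Real.exp (-η * l) := hr l hll₀
    have hr1 : |r l| ≤ 1 := le_trans hrl hc3
    have h1r : |1 + r l| ≤ 2 := by
      have := abs_le.1 hr1
      rw [abs_le]; constructor <;> linarith
    have haP : 0 < a l := lt_of_lt_of_le (by positivity) (ha l hll₀).1
    have haC : |a l| ≤ C := by rw [abs_of_pos haP]; exact (ha l hll₀).2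
    -- the G map
    set G : ℝ → ℝ → ℝ := fun x y =>
      a l * Real.exp (-2 * α l x y * l) * (1 + r l) / M l x y with hGdef
    have hexp0 : ∀ x ∈ Set.Icc (-ε₀) ε₀, ∀ y ∈ Set.Icc (-ε₀) ε₀,
        Real.exp (-2 * α l x y * l) ≤ Real.exp (-2 * α₀ * l) := by
      intro x hx y hy
      apply Real.exp_le_exp.2
      have := mul_le_mul_of_nonneg_right (hαm x hx y hy) hl0
      linarith
    have hGb : ∀ x ∈ Set.Icc (-ε₀) ε₀, ∀ y ∈ Set.Icc (-ε₀) ε₀,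
        |G x y| ≤ B₁ * Real.exp (-2 * α₀ * l) := by
      intro x hx y hy
      simp only [hGdef]
      rw [abs_div, abs_mul, abs_mul, abs_of_pos (Real.exp_pos _)]
      calc |a l| * Real.exp (-2 * α l x y * l) * |1 + r l| / |M l x y|
          ≤ C * Real.exp (-2 * α₀ * l) * 2 / c₀ := by
            apply div_le_div₀ (by positivity) ?_ hc₀ (hMc x hx y hy)
            apply mul_le_mul ?_ h1r (abs_nonneg _) (by positivity)
            exact mul_le_mul haC (hexp0 x hx y hy) (Real.exp_pos _).le hC.le
        _ = B₁ * Real.exp (-2 * α₀ * l) := by rw [hB₁def]; ring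
    have hGlip : ∀ x ∈ Set.Icc (-ε₀) ε₀, ∀ x' ∈ Set.Icc (-ε₀) ε₀,
        ∀ y ∈ Set.Icc (-ε₀) ε₀, ∀ y' ∈ Set.Icc (-ε₀) ε₀,
        |G x y - G x' y'| ≤
          (2 * C) * ((2 * C * l) / c₀ + C / c₀ ^ 2) * Real.exp (-2 * α₀ * l) *
            (|x - x'| + |y - y'|) := by
      intro x hx x' hx' y hy y' hy'
      have hΔα := hαlip x hx x' hx' y hy y' hy'
      have hΔM := hMlip x hx x' hx' y hy y' hy'
      have hM1 := hMne x hx y hy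
      have hM2 := hMne x' hx' y' hy'
      have hMc1 := hMc x hx y hy
      have hMc2 := hMc x' hx' y' hy'
      have he : |Real.exp (-2 * α l x y * l) - Real.exp (-2 * α l x' y' * l)| ≤
          Real.exp (-2 * α₀ * l) * (2 * l * (C * |x - x'| + C * |y - y'|)) := by
        have h := aux_exp_lip (-2 * α l x y * l) (-2 * α l x' y' * l) (-2 * α₀ * l)
          (by have := mul_le_mul_of_nonneg_right (hαm x hx y hy) hl0; linarith)
          (by have := mul_le_mul_of_nonneg_right (hαm x' hx' y' hy') hl0; linarith)
        have habs : |(-2 * α l x y * l) - (-2 * α l x' y' * l)| =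
            2 * l * |α l x y - α l x' y'| := by
          rw [show (-2 * α l x y * l) - (-2 * α l x' y' * l) =
            2 * l * (α l x' y' - α l x y) by ring, abs_mul,
            abs_of_nonneg (by linarith : (0:ℝ) ≤ 2 * l), abs_sub_comm]
        rw [habs] at h
        exact h.trans (mul_le_mul_of_nonneg_left
          (mul_le_mul_of_nonneg_left hΔα (by linarith)) (Real.exp_pos _).le)
      have hG1 : G x y - G x' y' = a l * (1 + r l) *
          ((Real.exp (-2 * α l x y * l) - Real.exp (-2 * α l x' y' * l)) / M l x y
            + Real.exp (-2 * α l x' y' * l) * (M l x' y' - M l x y) /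
              (M l x y * M l x' y')) := by
        simp only [hGdef]
        field_simp
        ring
      have t1 : |(Real.exp (-2 * α l x y * l) - Real.exp (-2 * α l x' y' * l)) / M l x y| ≤
          (Real.exp (-2 * α₀ * l) * (2 * l * (C * |x - x'| + C * |y - y'|))) / c₀ := by
        rw [abs_div]
        exact div_le_div₀ (by positivity) he hc₀ hMc1
      have t2 : |Real.exp (-2 * α l x' y' * l) * (M l x' y' - M l x y) /
            (M l x y * M l x' y')| ≤
          Real.exp (-2 * α₀ * l) * (C * |x - x'| + C * |y - y'|) / c₀ ^ 2 := by
        rw [abs_div, abs_mul]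
        apply div_le_div₀ (by positivity) ?_ (by positivity) ?_
        · apply mul_le_mul ?_ ?_ (abs_nonneg _) (Real.exp_pos _).le
          · rw [abs_of_pos (Real.exp_pos _)]; exact hexp0 x' hx' y' hy'
          · rw [abs_sub_comm]; exact hΔM
        · rw [abs_mul]
          calc c₀ ^ 2 = c₀ * c₀ := sq c₀
            _ ≤ |M l x y| * |M l x' y'| := mul_le_mul hMc1 hMc2 hc₀.le (abs_nonneg _)
      calc |G x y - G x' y'|
          = |a l| * |1 + r l| *
            |(Real.exp (-2 * α l x y * l) - Real.exp (-2 * α l x' y' * l)) / M l x y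
              + Real.exp (-2 * α l x' y' * l) * (M l x' y' - M l x y) /
                (M l x y * M l x' y')| := by
            rw [hG1, abs_mul, abs_mul]
        _ ≤ C * 2 * ((Real.exp (-2 * α₀ * l) * (2 * l * (C * |x - x'| + C * |y - y'|))) / c₀
              + Real.exp (-2 * α₀ * l) * (C * |x - x'| + C * |y - y'|) / c₀ ^ 2) := by
            apply mul_le_mul (mul_le_mul haC h1r (abs_nonneg _) hC.le)
              ((abs_add_le _ _).trans (add_le_add t1 t2)) (abs_nonneg _) (by positivity)
        _ = (2 * C) * ((2 * C * l) / c₀ + C / c₀ ^ 2) * Real.exp (-2 * α₀ * l) *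
              (|x - x'| + |y - y'|) := by
            field_simp
    -- the contraction map
    set κ : NNReal := ⟨(1 + q) / 2, by positivity⟩ with hκdef
    have hcoe : (κ : ℝ) = (1 + q) / 2 := rfl
    have hκ1 : κ < 1 := by
      rw [← NNReal.coe_lt_one, hcoe]; linarith
    set Φ : ℝ × ℝ → ℝ × ℝ := fun p => (F l p.1 (p.2 / K), K * G p.1 (p.2 / K)) with hΦdef
    have hdivI : ∀ y ∈ Set.Icc (-ε₀) ε₀, y / K ∈ Set.Icc (-ε₀) ε₀ := by
      intro y hy
      have h1 : |y| ≤ ε₀ := abs_le.2 (Set.mem_Icc.1 hy)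
      have h2 : |y / K| ≤ ε₀ := by
        rw [abs_div, abs_of_pos hK0]
        exact le_trans (div_le_div₀ hε₀.le h1 hK0 le_rfl) (div_le_self hε₀.le hK1)
      exact Set.mem_Icc.2 (abs_le.1 h2)
    have hmap : ∀ p ∈ (Set.Icc (-ε₀) ε₀ ×ˢ Set.Icc (-ε₀) ε₀ : Set (ℝ × ℝ)),
        Φ p ∈ (Set.Icc (-ε₀) ε₀ ×ˢ Set.Icc (-ε₀) ε₀ : Set (ℝ × ℝ)) := by
      rintro ⟨x, y⟩ ⟨hx, hy⟩
      have hyK := hdivI y hy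
      refine ⟨?_, ?_⟩
      · show F l x (y / K) ∈ Set.Icc (-ε₀) ε₀
        have h1 := hFlip x hx 0 h0I (y / K) hyK 0 h0I
        rw [sub_zero, sub_zero] at h1
        have h2 : |F l x (y / K)| ≤ |F l x (y / K) - F l 0 0| + |F l 0 0| := by
          have := abs_add_le (F l x (y / K) - F l 0 0) (F l 0 0)
          simpa using this
        have hxb : |x| ≤ ε₀ := abs_le.2 (Set.mem_Icc.1 hx)
        have hyb : |y| ≤ ε₀ := abs_le.2 (Set.mem_Icc.1 hy)
        have hyKb : |y / K| ≤ ε₀ / K := by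
          rw [abs_div, abs_of_pos hK0]
          exact div_le_div₀ hε₀.le hyb hK0 le_rfl
        have hCKe : C / K * ε₀ ≤ (1 - q) / 2 * ε₀ := mul_le_mul_of_nonneg_right hCK hε₀.le
        have hF00 := hF0 l hll₀
        have k1 : q * |x| ≤ q * ε₀ := mul_le_mul_of_nonneg_left hxb hq0.le
        have k2 : C * |y / K| ≤ C * (ε₀ / K) := mul_le_mul_of_nonneg_left hyKb hC.le
        have k3 : C * (ε₀ / K) = C / K * ε₀ := by ring
        have : |F l x (y / K)| ≤ ε₀ := by linarith
        exact Set.mem_Icc.2 (abs_le.1 this)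
      · show K * G x (y / K) ∈ Set.Icc (-ε₀) ε₀
        have h1 := hGb x hx (y / K) hyK
        have h2 : |K * G x (y / K)| ≤ ε₀ := by
          rw [abs_mul, abs_of_pos hK0]
          calc K * |G x (y / K)| ≤ K * (B₁ * Real.exp (-2 * α₀ * l)) :=
              mul_le_mul_of_nonneg_left h1 hK0.le
            _ = K * B₁ * Real.exp (-2 * α₀ * l) := by ring
            _ ≤ ε₀ := hc5'
        exact Set.mem_Icc.2 (abs_le.1 h2)
    have hlipΦ : ∀ p ∈ (Set.Icc (-ε₀) ε₀ ×ˢ Set.Icc (-ε₀) ε₀ : Set (ℝ × ℝ)),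
        ∀ p' ∈ (Set.Icc (-ε₀) ε₀ ×ˢ Set.Icc (-ε₀) ε₀ : Set (ℝ × ℝ)),
        dist (Φ p) (Φ p') ≤ κ * dist p p' := by
      rintro ⟨x, y⟩ ⟨hx, hy⟩ ⟨x', y'⟩ ⟨hx', hy'⟩
      have hyK := hdivI y hy
      have hyK' := hdivI y' hy'
      rw [Prod.dist_eq, Prod.dist_eq]
      simp only [Real.dist_eq, hΦdef]
      have hd1 : (0:ℝ) ≤ |x - x'| := abs_nonneg _
      have hd2 : (0:ℝ) ≤ |y - y'| := abs_nonneg _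
      have hdsup1 : |x - x'| ≤ max |x - x'| |y - y'| := le_max_left _ _
      have hdsup2 : |y - y'| ≤ max |x - x'| |y - y'| := le_max_right _ _
      have hdK : |y / K - y' / K| = |y - y'| / K := by
        rw [show y / K - y' / K = (y - y') / K by ring, abs_div, abs_of_pos hK0]
      rw [hcoe]
      apply max_le
      · have h1 := hFlip x hx x' hx' (y / K) hyK (y' / K) hyK'
        rw [hdK] at h1
        have k1 : q * |x - x'| ≤ q * max |x - x'| |y - y'| :=
          mul_le_mul_of_nonneg_left hdsup1 hq0.le
        have k2 : C * (|y - y'| / K) ≤ (1 - q) / 2 * max |x - x'| |y - y'| := by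
          rw [show C * (|y - y'| / K) = C / K * |y - y'| by ring]
          calc C / K * |y - y'| ≤ (1 - q) / 2 * |y - y'| :=
              mul_le_mul_of_nonneg_right hCK hd2
            _ ≤ (1 - q) / 2 * max |x - x'| |y - y'| :=
              mul_le_mul_of_nonneg_left hdsup2 (by linarith)
        calc |F l x (y / K) - F l x' (y' / K)| ≤ q * |x - x'| + C * (|y - y'| / K) := h1
          _ ≤ (1 + q) / 2 * max |x - x'| |y - y'| := by linarith
      · have h1 := hGlip x hx x' hx' (y / K) hyK (y' / K) hyK'
        rw [hdK] at h1
        have hle : l * Real.exp (-2 * α₀ * l) ≤ 1 / α₀ * Real.exp (-α₀ * l) := by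
          have h3 : α₀ * l ≤ Real.exp (α₀ * l) := by linarith [Real.add_one_le_exp (α₀ * l)]
          have h4 : Real.exp (-2 * α₀ * l) = Real.exp (-α₀ * l) * Real.exp (-α₀ * l) := by
            rw [← Real.exp_add]; congr 1; ring
          have h5 : Real.exp (-α₀ * l) * Real.exp (α₀ * l) = 1 := by
            rw [← Real.exp_add]; simp
          rw [h4, show 1 / α₀ * Real.exp (-α₀ * l) = Real.exp (-α₀ * l) / α₀ by ring,
            le_div_iff₀ hα₀]
          calc l * (Real.exp (-α₀ * l) * Real.exp (-α₀ * l)) * α₀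
              = (α₀ * l) * Real.exp (-α₀ * l) * Real.exp (-α₀ * l) := by ring
            _ ≤ Real.exp (α₀ * l) * Real.exp (-α₀ * l) * Real.exp (-α₀ * l) :=
                mul_le_mul_of_nonneg_right
                  (mul_le_mul_of_nonneg_right h3 (Real.exp_pos _).le) (Real.exp_pos _).le
            _ = Real.exp (-α₀ * l) := by
                rw [show Real.exp (α₀ * l) * Real.exp (-α₀ * l) * Real.exp (-α₀ * l)
                  = (Real.exp (-α₀ * l) * Real.exp (α₀ * l)) * Real.exp (-α₀ * l) by ring,
                  h5, one_mul]
        have hEEb : (2 * C) * ((2 * C * l) / c₀ + C / c₀ ^ 2) * Real.exp (-2 * α₀ * l) ≤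
            EE' * Real.exp (-α₀ * l) := by
          have hee : Real.exp (-2 * α₀ * l) ≤ Real.exp (-α₀ * l) :=
            Real.exp_le_exp.2 (by have := mul_nonneg hα₀.le hl0; linarith)
          rw [hEE'def]
          have e1 : (2 * C) * ((2 * C * l) / c₀) * Real.exp (-2 * α₀ * l) ≤
              (2 * C) * ((2 * C) / (α₀ * c₀)) * Real.exp (-α₀ * l) := by
            rw [show (2 * C) * ((2 * C * l) / c₀) * Real.exp (-2 * α₀ * l) =
              (4 * C ^ 2 / c₀) * (l * Real.exp (-2 * α₀ * l)) by ring,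
              show (2 * C) * ((2 * C) / (α₀ * c₀)) * Real.exp (-α₀ * l) =
              (4 * C ^ 2 / c₀) * (1 / α₀ * Real.exp (-α₀ * l)) by field_simp; ring]
            exact mul_le_mul_of_nonneg_left hle (by positivity)
          have e2 : (2 * C) * (C / c₀ ^ 2) * Real.exp (-2 * α₀ * l) ≤
              (2 * C) * (C / c₀ ^ 2) * Real.exp (-α₀ * l) :=
            mul_le_mul_of_nonneg_left hee (by positivity)
          have e3 := add_le_add e1 e2
          calc 2 * C * (2 * C * l / c₀ + C / c₀ ^ 2) * Real.exp (-2 * α₀ * l)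
              = (2 * C) * ((2 * C * l) / c₀) * Real.exp (-2 * α₀ * l) +
                (2 * C) * (C / c₀ ^ 2) * Real.exp (-2 * α₀ * l) := by ring
            _ ≤ (2 * C) * ((2 * C) / (α₀ * c₀)) * Real.exp (-α₀ * l) +
                (2 * C) * (C / c₀ ^ 2) * Real.exp (-α₀ * l) := e3
            _ = 2 * C * (2 * C / (α₀ * c₀) + C / c₀ ^ 2) * Real.exp (-α₀ * l) := by ring
        have h6 : K * |G x (y / K) - G x' (y' / K)| ≤
            (1 + q) / 2 * max |x - x'| |y - y'| := by
          have hs0 : (0:ℝ) ≤ |x - x'| + |y - y'| / K := by positivity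
          calc K * |G x (y / K) - G x' (y' / K)|
              ≤ K * ((2 * C) * ((2 * C * l) / c₀ + C / c₀ ^ 2) * Real.exp (-2 * α₀ * l) *
                  (|x - x'| + |y - y'| / K)) := mul_le_mul_of_nonneg_left h1 hK0.le
            _ ≤ K * (EE' * Real.exp (-α₀ * l) * (|x - x'| + |y - y'| / K)) :=
                mul_le_mul_of_nonneg_left (mul_le_mul_of_nonneg_right hEEb hs0) hK0.le
            _ = (EE' * Real.exp (-α₀ * l)) * (K * |x - x'| + |y - y'|) := by
                field_simp
            _ ≤ (EE' * Real.exp (-α₀ * l)) * ((K + 1) * max |x - x'| |y - y'|) := by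
                apply mul_le_mul_of_nonneg_left ?_ (by positivity)
                linarith [mul_le_mul_of_nonneg_left hdsup1 hK0.le, hdsup2]
            _ = (K + 1) * EE' * Real.exp (-α₀ * l) * max |x - x'| |y - y'| := by ring
            _ ≤ (1 + q) / 2 * max |x - x'| |y - y'| :=
                mul_le_mul_of_nonneg_right hc6 (le_trans hd1 (le_max_left _ _))
        calc |K * G x (y / K) - K * G x' (y' / K)|
            = K * |G x (y / K) - G x' (y' / K)| := by
              rw [show K * G x (y / K) - K * G x' (y' / K) =
                K * (G x (y / K) - G x' (y' / K)) by ring, abs_mul, abs_of_pos hK0]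
          _ ≤ (1 + q) / 2 * max |x - x'| |y - y'| := h6
    -- apply the fixed point lemma
    obtain ⟨p, hpD, hpfix, hpuniq⟩ := aux_fixed hε₀ κ hκ1 Φ hmap hlipΦ
    obtain ⟨hp1I, hp2I⟩ := hpD
    have hfix1 : F l p.1 (p.2 / K) = p.1 := by
      have := congrArg Prod.fst hpfix
      simpa [hΦdef] using this
    have hfix2 : K * G p.1 (p.2 / K) = p.2 := by
      have := congrArg Prod.snd hpfix
      simpa [hΦdef] using this
    have hlamI : p.2 / K ∈ Set.Icc (-ε₀) ε₀ := hdivI p.2 hp2I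
    have hGfix : G p.1 (p.2 / K) = p.2 / K := by
      rw [eq_div_iff hK0.ne']
      linear_combination hfix2
    have hMneP := hMne p.1 hp1I (p.2 / K) hlamI
    have heq2 : a l * Real.exp (-2 * α l p.1 (p.2 / K) * l) * (1 + r l) =
        p.2 / K * M l p.1 (p.2 / K) := by
      have h := hGfix
      simp only [hGdef] at h
      rwa [div_eq_iff hMneP] at h
    -- exponential comparisons
    have hminη : η₁ ≤ η := by rw [hη₁def]; exact min_le_left _ _
    have hminα : η₁ ≤ 2 * α₀ := by rw [hη₁def]; exact min_le_right _ _
    have hE1 : Real.exp (-2 * α₀ * l) ≤ Real.exp (-η₁ * l) := by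
      apply Real.exp_le_exp.2
      linarith [mul_nonneg (sub_nonneg.2 hminα) hl0]
    have hE2 : Real.exp (-η * l) ≤ Real.exp (-η₁ * l) := by
      apply Real.exp_le_exp.2
      linarith [mul_nonneg (sub_nonneg.2 hminη) hl0]
    have hE3 : Real.exp (-η₁ * l) ≤ Real.exp (-η' * l) := by
      apply Real.exp_le_exp.2
      have : η' ≤ η₁ := by rw [hη'def]; linarith
      linarith [mul_nonneg (sub_nonneg.2 this) hl0]
    have hlamb : |p.2 / K| ≤ B₁ * Real.exp (-2 * α₀ * l) := by
      rw [← hGfix]; exact hGb p.1 hp1I _ hlamI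
    have hlamb1 : |p.2 / K| ≤ B₁ * Real.exp (-η₁ * l) :=
      hlamb.trans (mul_le_mul_of_nonneg_left hE1 hB₁0.le)
    have hψb : |p.1| ≤ B₂ * Real.exp (-η₁ * l) := by
      have h1 := hFlip p.1 hp1I 0 h0I (p.2 / K) hlamI 0 h0I
      rw [sub_zero, sub_zero, hfix1] at h1
      have h2 : |p.1| ≤ |p.1 - F l 0 0| + |F l 0 0| := by
        have := abs_add_le (p.1 - F l 0 0) (F l 0 0)
        simpa using this
      have hF00 := hF0 l hll₀
      have k1 : C * |p.2 / K| ≤ C * (B₁ * Real.exp (-η₁ * l)) :=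
        mul_le_mul_of_nonneg_left hlamb1 hC.le
      have k3 : C * Real.exp (-η * l) ≤ C * Real.exp (-η₁ * l) :=
        mul_le_mul_of_nonneg_left hE2 hC.le
      have h3 : (1 - q) * |p.1| ≤ (C + C * B₁) * Real.exp (-η₁ * l) := by linarith
      rw [hB₂def, div_mul_eq_mul_div, le_div_iff₀ (by linarith : (0:ℝ) < 1 - q)]
      linarith [h3]
    have hΔα : |α l p.1 (p.2 / K) - α l 0 0| ≤ B₃ * Real.exp (-η₁ * l) := by
      have h1 := hαlip p.1 hp1I 0 h0I (p.2 / K) hlamI 0 h0I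
      rw [sub_zero, sub_zero] at h1
      have k1 : C * |p.1| ≤ C * (B₂ * Real.exp (-η₁ * l)) :=
        mul_le_mul_of_nonneg_left hψb hC.le
      have k2 : C * |p.2 / K| ≤ C * (B₁ * Real.exp (-η₁ * l)) :=
        mul_le_mul_of_nonneg_left hlamb1 hC.le
      rw [hB₃def]; linarith
    have hΔM : |M l p.1 (p.2 / K) - M l 0 0| ≤ B₃ * Real.exp (-η₁ * l) := by
      have h1 := hMlip p.1 hp1I 0 h0I (p.2 / K) hlamI 0 h0I
      rw [sub_zero, sub_zero] at h1
      have k1 : C * |p.1| ≤ C * (B₂ * Real.exp (-η₁ * l)) :=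
        mul_le_mul_of_nonneg_left hψb hC.le
      have k2 : C * |p.2 / K| ≤ C * (B₁ * Real.exp (-η₁ * l)) :=
        mul_le_mul_of_nonneg_left hlamb1 hC.le
      rw [hB₃def]; linarith
    have hll2 : l * Real.exp (-η₁ * l) ≤ 1 / η' * Real.exp (-η' * l) := by
      have h3 : η' * l ≤ Real.exp (η' * l) := by linarith [Real.add_one_le_exp (η' * l)]
      have h4 : Real.exp (-η₁ * l) = Real.exp (-η' * l) * Real.exp (-η' * l) := by
        rw [← Real.exp_add]; congr 1; rw [hη'def]; ring
      have h5 : Real.exp (-η' * l) * Real.exp (η' * l) = 1 := by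
        rw [← Real.exp_add]; simp
      rw [h4, show 1 / η' * Real.exp (-η' * l) = Real.exp (-η' * l) / η' by ring,
        le_div_iff₀ hη'0]
      calc l * (Real.exp (-η' * l) * Real.exp (-η' * l)) * η'
          = (η' * l) * Real.exp (-η' * l) * Real.exp (-η' * l) := by ring
        _ ≤ Real.exp (η' * l) * Real.exp (-η' * l) * Real.exp (-η' * l) :=
            mul_le_mul_of_nonneg_right
              (mul_le_mul_of_nonneg_right h3 (Real.exp_pos _).le) (Real.exp_pos _).le
        _ = Real.exp (-η' * l) := by
            rw [show Real.exp (η' * l) * Real.exp (-η' * l) * Real.exp (-η' * l)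
              = (Real.exp (-η' * l) * Real.exp (η' * l)) * Real.exp (-η' * l) by ring,
              h5, one_mul]
    have htb : |(-2 * α l p.1 (p.2 / K) * l) - (-2 * α l 0 0 * l)| ≤
        B₄ * Real.exp (-η' * l) := by
      have habs : |(-2 * α l p.1 (p.2 / K) * l) - (-2 * α l 0 0 * l)| =
          2 * l * |α l p.1 (p.2 / K) - α l 0 0| := by
        rw [show (-2 * α l p.1 (p.2 / K) * l) - (-2 * α l 0 0 * l) =
          2 * l * (α l 0 0 - α l p.1 (p.2 / K)) by ring, abs_mul,
          abs_of_nonneg (by linarith : (0:ℝ) ≤ 2 * l), abs_sub_comm]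
      rw [habs]
      calc 2 * l * |α l p.1 (p.2 / K) - α l 0 0|
          ≤ 2 * l * (B₃ * Real.exp (-η₁ * l)) :=
            mul_le_mul_of_nonneg_left hΔα (by linarith)
        _ = 2 * B₃ * (l * Real.exp (-η₁ * l)) := by ring
        _ ≤ 2 * B₃ * (1 / η' * Real.exp (-η' * l)) :=
            mul_le_mul_of_nonneg_left hll2 (by positivity)
        _ = B₄ * Real.exp (-η' * l) := by
            rw [hB₄def, hη'def]
            field_simp
            ring
    have hM0ne := hMne 0 h0I 0 h0I
    have hMc1 := hMc p.1 hp1I (p.2 / K) hlamI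
    have hMc0 := hMc 0 h0I 0 h0I
    have he10 : |Real.exp (-2 * α l p.1 (p.2 / K) * l) - Real.exp (-2 * α l 0 0 * l)| ≤
        Real.exp (-2 * α l 0 0 * l) * Real.exp 1 * (B₄ * Real.exp (-η' * l)) := by
      have habs := abs_le.1 htb
      have hm1 : -2 * α l p.1 (p.2 / K) * l ≤ -2 * α l 0 0 * l + 1 := by
        linarith [hc7, habs.2]
      have hm2 : -2 * α l 0 0 * l ≤ -2 * α l 0 0 * l + 1 := by linarith
      have h := aux_exp_lip (-2 * α l p.1 (p.2 / K) * l) (-2 * α l 0 0 * l)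
        (-2 * α l 0 0 * l + 1) hm1 hm2
      rw [Real.exp_add] at h
      exact h.trans (mul_le_mul_of_nonneg_left htb (by positivity))
    have heq3 : p.2 / K = a l * Real.exp (-2 * α l p.1 (p.2 / K) * l) * (1 + r l) /
        M l p.1 (p.2 / K) := by
      rw [eq_div_iff hMneP]
      exact heq2.symm
    -- final bundle
    refine ⟨(p.1, p.2 / K), ⟨hp1I, hlamI⟩, ⟨hfix1.symm, heq2⟩, ?_, ?_, ?_⟩
    · -- uniqueness
      intro ψ hψI μ hμI hψe hμe
      have hMneu := hMne ψ hψI μ hμI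
      have hμG : G ψ μ = μ := by
        simp only [hGdef]
        rw [hμe, mul_div_assoc, div_self hMneu, mul_one]
      have hμb : |μ| ≤ B₁ * Real.exp (-2 * α₀ * l) := hμG ▸ hGb ψ hψI μ hμI
      have hKμI : K * μ ∈ Set.Icc (-ε₀) ε₀ := by
        have h1 : |K * μ| ≤ ε₀ := by
          rw [abs_mul, abs_of_pos hK0]
          calc K * |μ| ≤ K * (B₁ * Real.exp (-2 * α₀ * l)) :=
              mul_le_mul_of_nonneg_left hμb hK0.le
            _ = K * B₁ * Real.exp (-2 * α₀ * l) := by ring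
            _ ≤ ε₀ := hc5'
        exact Set.mem_Icc.2 (abs_le.1 h1)
      have hKμK : K * μ / K = μ := mul_div_cancel_left₀ μ hK0.ne'
      have hfixμ : Φ (ψ, K * μ) = (ψ, K * μ) := by
        simp only [hΦdef]
        rw [Prod.mk.injEq]
        constructor
        · rw [hKμK]; exact hψe.symm
        · rw [hKμK, hμG]
      have hpe := hpuniq (ψ, K * μ) ⟨hψI, hKμI⟩ hfixμ
      have h1 : ψ = p.1 := congrArg Prod.fst hpe
      have h2 : K * μ = p.2 := congrArg Prod.snd hpe
      refine ⟨h1, ?_⟩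
      show μ = p.2 / K
      rw [← h2, hKμK]
    · -- the μ estimate
      show |p.2 / K - a l / M l 0 0 * Real.exp (-2 * α l 0 0 * l)| ≤
        C' * Real.exp (-2 * α l 0 0 * l) * Real.exp (-η' * l)
      have hsplit2 : p.2 / K - a l / M l 0 0 * Real.exp (-2 * α l 0 0 * l) =
          a l * ((Real.exp (-2 * α l p.1 (p.2 / K) * l) - Real.exp (-2 * α l 0 0 * l)) *
              (1 + r l) / M l p.1 (p.2 / K)
            + Real.exp (-2 * α l 0 0 * l) * r l / M l p.1 (p.2 / K)
            + Real.exp (-2 * α l 0 0 * l) * (M l 0 0 - M l p.1 (p.2 / K)) /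
              (M l p.1 (p.2 / K) * M l 0 0)) := by
        conv_lhs => rw [heq3]
        field_simp
        ring
      rw [hsplit2, abs_mul]
      have t1 : |(Real.exp (-2 * α l p.1 (p.2 / K) * l) - Real.exp (-2 * α l 0 0 * l)) *
            (1 + r l) / M l p.1 (p.2 / K)| ≤
          Real.exp (-2 * α l 0 0 * l) * Real.exp 1 * (B₄ * Real.exp (-η' * l)) * 2 / c₀ := by
        rw [abs_div, abs_mul]
        exact div_le_div₀ (by positivity)
          (mul_le_mul he10 h1r (abs_nonneg _) (by positivity)) hc₀ hMc1
      have t2 : |Real.exp (-2 * α l 0 0 * l) * r l / M l p.1 (p.2 / K)| ≤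
          Real.exp (-2 * α l 0 0 * l) * (C * Real.exp (-η' * l)) / c₀ := by
        rw [abs_div, abs_mul, abs_of_pos (Real.exp_pos _)]
        apply div_le_div₀ (by positivity) ?_ hc₀ hMc1
        apply mul_le_mul_of_nonneg_left ?_ (Real.exp_pos _).le
        exact hrl.trans (mul_le_mul_of_nonneg_left (hE2.trans hE3) hC.le)
      have t3 : |Real.exp (-2 * α l 0 0 * l) * (M l 0 0 - M l p.1 (p.2 / K)) /
            (M l p.1 (p.2 / K) * M l 0 0)| ≤
          Real.exp (-2 * α l 0 0 * l) * (B₃ * Real.exp (-η' * l)) / c₀ ^ 2 := by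
        rw [abs_div, abs_mul, abs_of_pos (Real.exp_pos _)]
        apply div_le_div₀ (by positivity) ?_ (by positivity) ?_
        · apply mul_le_mul_of_nonneg_left ?_ (Real.exp_pos _).le
          rw [abs_sub_comm]
          exact hΔM.trans (mul_le_mul_of_nonneg_left hE3 hB₃0.le)
        · rw [abs_mul]
          calc c₀ ^ 2 = c₀ * c₀ := sq c₀
            _ ≤ |M l p.1 (p.2 / K)| * |M l 0 0| := mul_le_mul hMc1 hMc0 hc₀.le (abs_nonneg _)
      have hXb := (abs_add_le _ _).trans (add_le_add ((abs_add_le _ _).trans (add_le_add t1 t2)) t3)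
      calc |a l| * |(Real.exp (-2 * α l p.1 (p.2 / K) * l) - Real.exp (-2 * α l 0 0 * l)) *
              (1 + r l) / M l p.1 (p.2 / K)
            + Real.exp (-2 * α l 0 0 * l) * r l / M l p.1 (p.2 / K)
            + Real.exp (-2 * α l 0 0 * l) * (M l 0 0 - M l p.1 (p.2 / K)) /
              (M l p.1 (p.2 / K) * M l 0 0)|
          ≤ C * (Real.exp (-2 * α l 0 0 * l) * Real.exp 1 * (B₄ * Real.exp (-η' * l)) * 2 / c₀
            + Real.exp (-2 * α l 0 0 * l) * (C * Real.exp (-η' * l)) / c₀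
            + Real.exp (-2 * α l 0 0 * l) * (B₃ * Real.exp (-η' * l)) / c₀ ^ 2) :=
            mul_le_mul haC hXb (abs_nonneg _) hC.le
        _ = C₅ * Real.exp (-2 * α l 0 0 * l) * Real.exp (-η' * l) := by
            rw [hC₅def]
            field_simp
        _ ≤ C' * Real.exp (-2 * α l 0 0 * l) * Real.exp (-η' * l) := by
            have hCC : C₅ ≤ C' := by rw [hC'def]; linarith
            apply mul_le_mul_of_nonneg_right ?_ (Real.exp_pos _).le
            exact mul_le_mul_of_nonneg_right hCC (Real.exp_pos _).le
    · -- the ψ estimate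
      show |p.1| ≤ C' * Real.exp (-η' * l)
      have h1 : B₂ * Real.exp (-η₁ * l) ≤ C' * Real.exp (-η' * l) := by
        have h2 : B₂ * Real.exp (-η₁ * l) ≤ B₂ * Real.exp (-η' * l) :=
          mul_le_mul_of_nonneg_left hE3 hB₂0.le
        have h3 : B₂ * Real.exp (-η' * l) ≤ C' * Real.exp (-η' * l) := by
          apply mul_le_mul_of_nonneg_right ?_ (Real.exp_pos _).le
          rw [hC'def]; linarith
        linarith
      exact hψb.trans h1
  refine ⟨max l₁ l₀, le_max_right _ _, η', hη'0, C', hC'0,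
    fun l => if h : max l₁ l₀ ≤ l then (main l h).choose.1 else 0,
    fun l => if h : max l₁ l₀ ≤ l then (main l h).choose.2 else 0, ?_⟩
  intro l hl
  simp only [dif_pos hl]
  exact (main l hl).choose_spec
end

section
/- Let P ⊂ ℝ^m be a nonempty compact set, let l₀ ∈ ℝ and b₀, η, C > 0. Suppose: (i) v = (v₁, v₂) : P → ℝ² is continuous; (ii) G : P × ℝ² → ℝ is continuous, C¹ in the ℝ²-variable y with ∂G/∂y jointly continuous, G(p, 0) = 0 for all p ∈ P, and |v₁(p) · ∂G/∂y₂(p, 0) − v₂(p) · ∂G/∂y₁(p, 0)| ≥ b₀ for all p ∈ P; (iii) s : [l₀, ∞) × P × ℝ² → ℝ is continuous, C¹ in y, with |s(l, p, y)| ≤ C e^{−η l} and |∂s/∂y(l, p, y)| ≤ C e^{−η l}. Then there exist ε₀ > 0, l₁ ≥ l₀ and C' > 0 such that for every l ≥ l₁ and every p ∈ P the system v₁(p) y₁ + v₂(p) y₂ = 0 and G(p, y) = s(l, p, y) has exactly one solution y = y*(l, p) with |y| ≤ ε₀, and this solution satisfies |y*(l, p)| ≤ C' e^{−η l}. -/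
open Set Real

/-- Scalar key lemma: a function with derivative uniformly bounded below by `c > 0`
on `[-ρ, ρ]` and with `|g 0| < c * ρ` has a unique zero in `[-ρ, ρ]`, of size `≤ |g 0|/c`. -/
lemma scalar_key (g gd : ℝ → ℝ) (ρ c : ℝ) (hρ : 0 < ρ) (hc : 0 < c)
    (hd : ∀ t, HasDerivAt g (gd t) t)
    (hlb : ∀ t ∈ Icc (-ρ) ρ, c ≤ gd t)
    (h0 : |g 0| < c * ρ) :
    ∃ t ∈ Icc (-ρ) ρ, g t = 0 ∧ c * |t| ≤ |g 0| ∧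
      ∀ u ∈ Icc (-ρ) ρ, g u = 0 → u = t := by
  have hcont : ContinuousOn g (Icc (-ρ) ρ) :=
    fun t _ => (hd t).continuousAt.continuousWithinAt
  have hdiff : DifferentiableOn ℝ g (interior (Icc (-ρ) ρ)) :=
    fun t _ => (hd t).differentiableAt.differentiableWithinAt
  have hderiv : ∀ t, deriv g t = gd t := fun t => (hd t).deriv
  have hmvt : ∀ x ∈ Icc (-ρ) ρ, ∀ y ∈ Icc (-ρ) ρ, x ≤ y → c * (y - x) ≤ g y - g x :=
    (convex_Icc _ _).mul_sub_le_image_sub_of_le_deriv hcont hdiff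
      (fun t ht => (hderiv t) ▸ hlb t (interior_subset ht))
  have smono : StrictMonoOn g (Icc (-ρ) ρ) :=
    strictMonoOn_of_deriv_pos (convex_Icc _ _) hcont
      (fun t ht => by rw [hderiv t]; exact hc.trans_le (hlb t (interior_subset ht)))
  have hmρ : -ρ ≤ ρ := by linarith
  have hmem0 : (0:ℝ) ∈ Icc (-ρ) ρ := ⟨by linarith, hρ.le⟩
  have hmemρ : ρ ∈ Icc (-ρ) ρ := ⟨hmρ, le_refl _⟩
  have hmemmρ : -ρ ∈ Icc (-ρ) ρ := ⟨le_refl _, hmρ⟩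
  obtain ⟨hg1, hg2⟩ := abs_lt.mp h0
  have h1 := hmvt 0 hmem0 ρ hmemρ hρ.le
  have h2 := hmvt (-ρ) hmemmρ 0 hmem0 (by linarith)
  have hgneg : g (-ρ) < 0 := by nlinarith
  have hgpos : 0 < g ρ := by nlinarith
  have hIVT := intermediate_value_Icc hmρ hcont
  have h0mem : (0:ℝ) ∈ Icc (g (-ρ)) (g ρ) := ⟨hgneg.le, hgpos.le⟩
  obtain ⟨t, htmem, hgt⟩ := hIVT h0mem
  refine ⟨t, htmem, hgt, ?_, ?_⟩
  · rcases le_or_gt 0 t with h | h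
    · have h3 := hmvt 0 hmem0 t htmem h
      rw [abs_of_nonneg h]
      have h4 : -g 0 ≤ |g 0| := neg_le_abs _
      nlinarith
    · have h3 := hmvt t htmem 0 hmem0 h.le
      rw [abs_of_neg h]
      have h4 : g 0 ≤ |g 0| := le_abs_self _
      nlinarith
  · intro u hu hgu
    exact smono.injOn hu htmem (by rw [hgu, hgt])

set_option maxHeartbeats 1600000 in
/-- Unique solvability, near the origin, of the system consisting of the normality constraint
`v₁(p) y₁ + v₂(p) y₂ = 0` and the equation `G(p,y) = s(l,p,y)` with exponentially small
right-hand side, with solution `y*(l,p) = O(e^{−η l})`. -/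
theorem stmt_6 (m : ℕ) (P : Set (Fin m → ℝ)) (hP : IsCompact P) (hPne : P.Nonempty)
    (l₀ b₀ η C : ℝ) (hb₀ : 0 < b₀) (hη : 0 < η) (hC : 0 < C)
    (v1 v2 : (Fin m → ℝ) → ℝ)
    (hv1 : ContinuousOn v1 P) (hv2 : ContinuousOn v2 P)
    (G : (Fin m → ℝ) → ℝ × ℝ → ℝ)
    (G' : (Fin m → ℝ) → ℝ × ℝ → (ℝ × ℝ →L[ℝ] ℝ))
    (hGcont : ContinuousOn (fun pq : (Fin m → ℝ) × (ℝ × ℝ) => G pq.1 pq.2)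
      (P ×ˢ (Set.univ : Set (ℝ × ℝ))))
    (hGdiff : ∀ p ∈ P, ∀ y : ℝ × ℝ, HasFDerivAt (G p) (G' p y) y)
    (hG'cont : ContinuousOn (fun pq : (Fin m → ℝ) × (ℝ × ℝ) => G' pq.1 pq.2)
      (P ×ˢ (Set.univ : Set (ℝ × ℝ))))
    (hG0 : ∀ p ∈ P, G p 0 = 0)
    (hnd : ∀ p ∈ P, b₀ ≤ |v1 p * G' p 0 ((0 : ℝ), (1 : ℝ)) - v2 p * G' p 0 ((1 : ℝ), (0 : ℝ))|)
    (s : ℝ → (Fin m → ℝ) → ℝ × ℝ → ℝ)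
    (s' : ℝ → (Fin m → ℝ) → ℝ × ℝ → (ℝ × ℝ →L[ℝ] ℝ))
    (hscont : ∀ l ≥ l₀, ContinuousOn (fun pq : (Fin m → ℝ) × (ℝ × ℝ) => s l pq.1 pq.2)
      (P ×ˢ (Set.univ : Set (ℝ × ℝ))))
    (hs : ∀ l ≥ l₀, ∀ p ∈ P, ∀ y : ℝ × ℝ, |s l p y| ≤ C * Real.exp (-η * l))
    (hs' : ∀ l ≥ l₀, ∀ p ∈ P, ∀ y : ℝ × ℝ,
      HasFDerivAt (s l p) (s' l p y) y ∧ ‖s' l p y‖ ≤ C * Real.exp (-η * l)) :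
    ∃ ε₀ > 0, ∃ l₁ ≥ l₀, ∃ C' > 0, ∃ ys : ℝ → (Fin m → ℝ) → ℝ × ℝ,
      ∀ l ≥ l₁, ∀ p ∈ P,
        ‖ys l p‖ ≤ ε₀ ∧
        v1 p * (ys l p).1 + v2 p * (ys l p).2 = 0 ∧
        G p (ys l p) = s l p (ys l p) ∧
        (∀ y : ℝ × ℝ, ‖y‖ ≤ ε₀ → v1 p * y.1 + v2 p * y.2 = 0 →
          G p y = s l p y → y = ys l p) ∧
        ‖ys l p‖ ≤ C' * Real.exp (-η * l) := by
  classical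
  -- the direction vector of the constraint line, and its norm bounds
  set nw : (Fin m → ℝ) → ℝ := fun p => ‖((v2 p, -(v1 p)) : ℝ × ℝ)‖ with hnwdef
  have hnwc : ContinuousOn nw P := (hv2.prodMk hv1.neg).norm
  obtain ⟨p₀, hp₀, hmin⟩ := hP.exists_isMinOn hPne hnwc
  obtain ⟨p₁, hp₁, hmax⟩ := hP.exists_isMaxOn hPne hnwc
  set δ := nw p₀ with hδdef
  set M := nw p₁ with hMdef
  have hδM : ∀ p ∈ P, δ ≤ nw p ∧ nw p ≤ M :=
    fun p hp => ⟨isMinOn_iff.mp hmin p hp, isMaxOn_iff.mp hmax p hp⟩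
  have hδpos : 0 < δ := by
    rcases (norm_nonneg ((v2 p₀, -(v1 p₀)) : ℝ × ℝ)).lt_or_eq with h | h
    · exact h
    · exfalso
      have h0 : ((v2 p₀, -(v1 p₀)) : ℝ × ℝ) = 0 := norm_eq_zero.mp h.symm
      have h1 : v2 p₀ = 0 := congrArg Prod.fst h0
      have h2 : v1 p₀ = 0 := by
        have := congrArg Prod.snd h0
        simpa using this
      have := hnd p₀ hp₀
      rw [h1, h2] at this
      simp at this
      linarith
  have hδleM : δ ≤ M := (hδM p₀ hp₀).2
  have hMpos : 0 < M := hδpos.trans_le hδleM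
  -- uniform continuity of G' on a compact neighborhood
  set K := P ×ˢ Metric.closedBall (0 : ℝ × ℝ) 1 with hKdef
  have hKcomp : IsCompact K := hP.prod (isCompact_closedBall 0 1)
  have hG'K : ContinuousOn (fun pq : (Fin m → ℝ) × (ℝ × ℝ) => G' pq.1 pq.2) K :=
    hG'cont.mono (Set.prod_mono subset_rfl (subset_univ _))
  have huc := hKcomp.uniformContinuousOn_of_continuous hG'K
  obtain ⟨d, hdpos, hd⟩ := Metric.uniformContinuousOn_iff.mp huc (b₀ / (4 * M)) (by positivity)
  set ε₁ := min (d / 2) 1 with hε₁def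
  have hε₁pos : 0 < ε₁ := lt_min (by linarith) one_pos
  have hGlip : ∀ p ∈ P, ∀ y : ℝ × ℝ, ‖y‖ ≤ ε₁ → ‖G' p y - G' p 0‖ ≤ b₀ / (4 * M) := by
    intro p hp y hy
    have hy1 : ‖y‖ ≤ 1 := hy.trans (min_le_right _ _)
    have hmem1 : ((p, y) : (Fin m → ℝ) × (ℝ × ℝ)) ∈ K :=
      ⟨hp, by simpa [Metric.mem_closedBall, dist_zero_right] using hy1⟩
    have hmem2 : ((p, (0 : ℝ × ℝ)) : (Fin m → ℝ) × (ℝ × ℝ)) ∈ K :=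
      ⟨hp, by simp [Metric.mem_closedBall]⟩
    have hdist : dist ((p, y) : (Fin m → ℝ) × (ℝ × ℝ)) (p, (0 : ℝ × ℝ)) < d := by
      rw [Prod.dist_eq]
      simp only [dist_self, dist_zero_right]
      have : ‖y‖ < d := lt_of_le_of_lt (hy.trans (min_le_left _ _)) (by linarith)
      exact max_lt hdpos this
    have := hd _ hmem1 _ hmem2 hdist
    rw [dist_eq_norm] at this
    exact this.le
  set ρ := ε₁ / M with hρdef
  have hρpos : 0 < ρ := by positivity
  set ε₀ := ρ * δ with hε₀def
  have hε₀pos : 0 < ε₀ := by positivity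
  set κ₀ := min (b₀ / (4 * M)) (min (b₀ / 4 * ρ) (ε₀ * b₀ / (2 * M))) with hκ₀def
  have hκ₀pos : 0 < κ₀ := lt_min (by positivity) (lt_min (by positivity) (by positivity))
  set l₁ := max l₀ (Real.log (C / κ₀) / η) with hl₁def
  have hl₁ : l₀ ≤ l₁ := le_max_left _ _
  have hexp : ∀ l, l₁ ≤ l → C * Real.exp (-η * l) ≤ κ₀ := by
    intro l hl
    have h1 : Real.log (C / κ₀) / η ≤ l := le_trans (le_max_right _ _) hl
    have h2 : Real.log (C / κ₀) ≤ η * l := by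
      rw [div_le_iff₀ hη] at h1
      linarith
    have h3 : Real.exp (-η * l) ≤ κ₀ / C := by
      calc Real.exp (-η * l) ≤ Real.exp (-(Real.log (C / κ₀))) := by
            apply Real.exp_le_exp.2; linarith
        _ = (C / κ₀)⁻¹ := by rw [Real.exp_neg, Real.exp_log (by positivity)]
        _ = κ₀ / C := by rw [inv_div]
    calc C * Real.exp (-η * l) ≤ C * (κ₀ / C) := by
          exact mul_le_mul_of_nonneg_left h3 hC.le
      _ = κ₀ := by field_simp
  set C' := 2 * M * C / b₀ with hC'def
  have hC'pos : 0 < C' := by positivity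
  -- the key pointwise claim
  have key : ∀ l p, ∃ y : ℝ × ℝ, l₁ ≤ l → p ∈ P →
      (‖y‖ ≤ ε₀ ∧ v1 p * y.1 + v2 p * y.2 = 0 ∧ G p y = s l p y ∧
        (∀ z : ℝ × ℝ, ‖z‖ ≤ ε₀ → v1 p * z.1 + v2 p * z.2 = 0 → G p z = s l p z → z = y) ∧
        ‖y‖ ≤ C' * Real.exp (-η * l)) := by
    intro l p
    by_cases hl : l₁ ≤ l
    swap
    · exact ⟨0, fun h => absurd h hl⟩
    by_cases hp : p ∈ P
    swap
    · exact ⟨0, fun _ h => absurd h hp⟩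
    have hll₀ : l₀ ≤ l := hl₁.trans hl
    set w : ℝ × ℝ := (v2 p, -(v1 p)) with hwdef
    obtain ⟨hwδ, hwM⟩ := hδM p hp
    have hwδ' : δ ≤ ‖w‖ := hwδ
    have hwM' : ‖w‖ ≤ M := hwM
    set A := G' p 0 w with hAdef
    have hAeq : A = -(v1 p * G' p 0 ((0 : ℝ), (1 : ℝ)) - v2 p * G' p 0 ((1 : ℝ), (0 : ℝ))) := by
      have hw2 : w = v2 p • ((1 : ℝ), (0 : ℝ)) + (-(v1 p)) • ((0 : ℝ), (1 : ℝ)) := by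
        simp [hwdef, Prod.ext_iff]
      rw [hAdef, hw2, map_add, map_smul, map_smul]
      simp only [smul_eq_mul]
      ring
    have hAabs : b₀ ≤ |A| := by rw [hAeq, abs_neg]; exact hnd p hp
    set σ : ℝ := if 0 ≤ A then 1 else -1 with hσdef
    have hσA : σ * A = |A| := by
      by_cases h : 0 ≤ A
      · simp [hσdef, h, abs_of_nonneg h]
      · push_neg at h
        simp [hσdef, not_le.mpr h, abs_of_neg h]
    have hσabs : |σ| = 1 := by
      by_cases h : 0 ≤ A <;> simp [hσdef, h]
    have hσne : σ ≠ 0 := by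
      intro h; rw [h] at hσabs; simp at hσabs
    set g : ℝ → ℝ := fun t => σ * (G p (t • w) - s l p (t • w)) with hgdef
    set gd : ℝ → ℝ := fun t => σ * ((G' p (t • w)) w - (s' l p (t • w)) w) with hgddef
    have hsl := hs' l hll₀ p hp
    have hdg : ∀ t, HasDerivAt g (gd t) t := by
      intro t
      have hy : HasDerivAt (fun u : ℝ => u • w) w t := by
        simpa using (hasDerivAt_id t).smul_const w
      have h1 : HasDerivAt (fun u : ℝ => G p (u • w)) (G' p (t • w) w) t :=
        (hGdiff p hp (t • w)).comp_hasDerivAt t hy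
      have h2 : HasDerivAt (fun u : ℝ => s l p (u • w)) (s' l p (t • w) w) t :=
        ((hsl (t • w)).1).comp_hasDerivAt t hy
      have := (h1.sub h2).const_mul σ
      simpa [hgdef, hgddef, mul_sub] using this
    have hlb : ∀ t ∈ Icc (-ρ) ρ, b₀ / 2 ≤ gd t := by
      intro t ht
      have htabs : |t| ≤ ρ := abs_le.2 ⟨ht.1, ht.2⟩
      have htw : ‖t • w‖ ≤ ε₁ := by
        rw [norm_smul, Real.norm_eq_abs]
        calc |t| * ‖w‖ ≤ ρ * M :=
              mul_le_mul htabs hwM' (norm_nonneg _) hρpos.le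
          _ = ε₁ := by rw [hρdef]; field_simp
      have e1 : ‖G' p (t • w) - G' p 0‖ ≤ b₀ / (4 * M) := hGlip p hp _ htw
      have e2 : ‖s' l p (t • w)‖ ≤ C * Real.exp (-η * l) := (hsl (t • w)).2
      have e2' : C * Real.exp (-η * l) ≤ b₀ / (4 * M) :=
        (hexp l hl).trans (min_le_left _ _)
      have key1 : |((G' p (t • w) - G' p 0 : ℝ × ℝ →L[ℝ] ℝ)) w| ≤ b₀ / 4 := by
        calc |((G' p (t • w) - G' p 0 : ℝ × ℝ →L[ℝ] ℝ)) w|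
            ≤ ‖(G' p (t • w) - G' p 0 : ℝ × ℝ →L[ℝ] ℝ)‖ * ‖w‖ :=
              (G' p (t • w) - G' p 0).le_opNorm w
          _ ≤ (b₀ / (4 * M)) * M :=
              mul_le_mul e1 hwM' (norm_nonneg _) (by positivity)
          _ = b₀ / 4 := by field_simp
      have key2 : |(s' l p (t • w)) w| ≤ b₀ / 4 := by
        calc |(s' l p (t • w)) w| ≤ ‖s' l p (t • w)‖ * ‖w‖ := (s' l p (t • w)).le_opNorm w
          _ ≤ (b₀ / (4 * M)) * M :=
              mul_le_mul (e2.trans e2') hwM' (norm_nonneg _) (by positivity)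
          _ = b₀ / 4 := by field_simp
      have expand : gd t = σ * A + σ * ((G' p (t • w) - G' p 0 : ℝ × ℝ →L[ℝ] ℝ) w)
          - σ * ((s' l p (t • w)) w) := by
        simp only [hgddef, ContinuousLinearMap.sub_apply, hAdef]
        ring
      have hb1 := abs_le.1 (by
        rw [abs_mul, hσabs, one_mul]; exact key1 :
        |σ * ((G' p (t • w) - G' p 0 : ℝ × ℝ →L[ℝ] ℝ) w)| ≤ b₀ / 4)
      have hb2 := abs_le.1 (by
        rw [abs_mul, hσabs, one_mul]; exact key2 :
        |σ * ((s' l p (t • w)) w)| ≤ b₀ / 4)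
      rw [expand, hσA]
      linarith [hb1.1, hb2.2]
    have hg0 : |g 0| ≤ C * Real.exp (-η * l) := by
      have : g 0 = σ * (G p 0 - s l p 0) := by simp [hgdef]
      rw [this, abs_mul, hσabs, one_mul, hG0 p hp, zero_sub, abs_neg]
      exact hs l hll₀ p hp 0
    have h0bound : |g 0| < (b₀ / 2) * ρ := by
      have h1 : C * Real.exp (-η * l) ≤ κ₀ := hexp l hl
      have h2 : κ₀ ≤ b₀ / 4 * ρ := (min_le_right _ _).trans (min_le_left _ _)
      have h3 : |g 0| ≤ b₀ / 4 * ρ := hg0.trans (h1.trans h2)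
      linarith [mul_pos hb₀ hρpos]
    obtain ⟨t, htmem, hgt0, htb, huniq⟩ :=
      scalar_key g gd ρ (b₀ / 2) hρpos (by positivity) hdg hlb h0bound
    have hGeqs : G p (t • w) = s l p (t • w) := by
      have := hgt0
      rw [hgdef] at this
      have h2 : G p (t • w) - s l p (t • w) = 0 := by
        rcases mul_eq_zero.mp this with h | h
        · exact absurd h hσne
        · exact h
      linarith
    have htbound : |t| ≤ 2 / b₀ * (C * Real.exp (-η * l)) := by
      have h1 : b₀ / 2 * |t| ≤ C * Real.exp (-η * l) := htb.trans hg0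
      calc |t| = 2 / b₀ * (b₀ / 2 * |t|) := by field_simp
        _ ≤ 2 / b₀ * (C * Real.exp (-η * l)) :=
            mul_le_mul_of_nonneg_left h1 (by positivity)
    have hynorm : ‖t • w‖ ≤ C' * Real.exp (-η * l) := by
      rw [norm_smul, Real.norm_eq_abs]
      calc |t| * ‖w‖ ≤ (2 / b₀ * (C * Real.exp (-η * l))) * M :=
            mul_le_mul htbound hwM' (norm_nonneg _) (by positivity)
        _ = C' * Real.exp (-η * l) := by rw [hC'def]; ring
    have hynε₀ : ‖t • w‖ ≤ ε₀ := by
      have h1 : C * Real.exp (-η * l) ≤ κ₀ := hexp l hl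
      have h2 : κ₀ ≤ ε₀ * b₀ / (2 * M) := (min_le_right _ _).trans (min_le_right _ _)
      have h3 : C' * Real.exp (-η * l) ≤ C' * (κ₀ / C) := by
        apply mul_le_mul_of_nonneg_left _ hC'pos.le
        rw [le_div_iff₀ hC, mul_comm]
        exact h1
      have h4 : C' * (κ₀ / C) ≤ ε₀ := by
        rw [hC'def]
        rw [le_div_iff₀ (by positivity : (0:ℝ) < 2 * M)] at h2
        calc 2 * M * C / b₀ * (κ₀ / C) = 2 * M * κ₀ / b₀ := by field_simp
          _ ≤ ε₀ * b₀ / b₀ := (div_le_div_iff_of_pos_right hb₀).mpr (by linarith)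
          _ = ε₀ := by field_simp
      exact hynorm.trans (h3.trans h4)
    refine ⟨t • w, fun _ _ => ⟨hynε₀, ?_, hGeqs, ?_, hynorm⟩⟩
    · show v1 p * (t • w).1 + v2 p * (t • w).2 = 0
      simp only [hwdef, Prod.smul_fst, Prod.smul_snd, smul_eq_mul]
      ring
    · intro z hzε hzc hzeq
      have hwne : w ≠ 0 := by
        intro h
        rw [h, norm_zero] at hwδ'
        linarith
      have hn2 : 0 < (v1 p) ^ 2 + (v2 p) ^ 2 := by
        rcases eq_or_ne (v1 p) 0 with h1 | h1
        · rcases eq_or_ne (v2 p) 0 with h2 | h2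
          · exfalso; apply hwne; rw [hwdef, h1, h2]; simp
          · have h3 : 0 < (v2 p) ^ 2 := by positivity
            linarith [sq_nonneg (v1 p)]
        · have h3 : 0 < (v1 p) ^ 2 := by positivity
          linarith [sq_nonneg (v2 p)]
      set u := (z.1 * v2 p - z.2 * v1 p) / ((v1 p) ^ 2 + (v2 p) ^ 2) with hudef
      have hzu : z = u • w := by
        have h1 : z.1 = u * v2 p := by
          rw [hudef]
          field_simp
          linear_combination v1 p * hzc
        have h2 : z.2 = u * (-(v1 p)) := by
          rw [hudef]
          field_simp
          linear_combination v2 p * hzc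
        rw [hwdef]
        ext
        · simpa using h1
        · simpa using h2
      have hunorm : |u| * ‖w‖ ≤ ε₀ := by
        rw [← Real.norm_eq_abs, ← norm_smul, ← hzu]
        exact hzε
      have huρ : |u| ≤ ρ := by
        have h1 : |u| * δ ≤ |u| * ‖w‖ := mul_le_mul_of_nonneg_left hwδ' (abs_nonneg u)
        have h2 : |u| * δ ≤ ρ * δ := by rw [hε₀def] at hunorm; linarith
        exact le_of_mul_le_mul_right (by linarith) hδpos
      have hgu : g u = 0 := by
        rw [hgdef]
        simp only
        rw [← hzu, hzeq]
        ring
      have := huniq u (abs_le.1 huρ) hgu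
      rw [hzu, this]
  choose ys hys using key
  refine ⟨ε₀, hε₀pos, l₁, hl₁, C', hC'pos, ys, ?_⟩
  intro l hl p hp
  exact hys l p hl hp
end

section
/- Let Z : ℝ → ℝ be a C², 2π-periodic function such that whenever Z'(φ) = 0 one has Z''(φ) ≠ 0. Let 0 < c₁ ≤ c₂, K > 0, L₀ ∈ ℝ, and let Φ : [L₀, ∞) → ℝ be C² with c₁ ≤ Φ'(L) ≤ c₂ and |Φ''(L)| ≤ K for all L. Let η, C > 0 and let ρ : [L₀, ∞) → ℝ be C² with |ρ(L)|, |ρ'(L)|, |ρ''(L)| ≤ C e^{−η L}. Define λ₂(L) := Z(Φ(L)) + ρ(L). Then there exist L₁ ≥ L₀ and ε > 0 such that: (i) for every L* ≥ L₁ with Z'(Φ(L*)) = 0, the derivative λ₂' has exactly one zero L̂ in the interval (L* − ε, L* + ε), and λ₂''(L̂) ≠ 0; (ii) every zero of λ₂' in [L₁ + ε, ∞) lies within distance ε of some L* with Z'(Φ(L*)) = 0. -/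
open Set Real

private lemma mvt_lower {f f' : ℝ → ℝ} {a b α : ℝ}
    (hd : ∀ t ∈ Set.Icc a b, HasDerivAt f (f' t) t)
    (hl : ∀ t ∈ Set.Icc a b, α ≤ f' t) (hab : a ≤ b) :
    α * (b - a) ≤ f b - f a := by
  rcases eq_or_lt_of_le hab with rfl | h
  · simp
  · have hc : ContinuousOn f (Set.Icc a b) :=
      fun t ht => (hd t ht).continuousAt.continuousWithinAt
    obtain ⟨c, hc1, hc2⟩ := exists_hasDerivAt_eq_slope f f' h hc
      (fun x hx => hd x (Set.mem_Icc_of_Ioo hx))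
    have h1 := hl c (Set.mem_Icc_of_Ioo hc1)
    rw [hc2] at h1
    have hba : (0:ℝ) < b - a := sub_pos.mpr h
    have := (le_div_iff₀ hba).mp h1
    linarith

private lemma mvt_upper {f f' : ℝ → ℝ} {a b β : ℝ}
    (hd : ∀ t ∈ Set.Icc a b, HasDerivAt f (f' t) t)
    (hu : ∀ t ∈ Set.Icc a b, f' t ≤ β) (hab : a ≤ b) :
    f b - f a ≤ β * (b - a) := by
  have := mvt_lower (f := fun x => -f x) (f' := fun x => -f' x) (α := -β)
    (fun t ht => (hd t ht).neg) (fun t ht => neg_le_neg (hu t ht)) hab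
  linarith

private lemma per_max {f : ℝ → ℝ} (hf : Continuous f)
    (hper : Function.Periodic f (2 * Real.pi)) : ∃ y, ∀ x, f x ≤ f y := by
  obtain ⟨y, hy, hmax⟩ := isCompact_Icc.exists_isMaxOn
    (Set.nonempty_Icc.mpr (by positivity : (0:ℝ) ≤ 2 * Real.pi)) hf.continuousOn
  refine ⟨y, fun x => ?_⟩
  obtain ⟨z, hz, hxz⟩ := hper.exists_mem_Ico₀ (by positivity) x
  rw [hxz]; exact hmax (Set.mem_Icc_of_Ico hz)

private lemma per_deriv {f : ℝ → ℝ} {c : ℝ} (hper : Function.Periodic f c) :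
    Function.Periodic (deriv f) c := fun x => by
  have h : (fun y => f (y + c)) = f := funext hper
  rw [← deriv_comp_add_const f c x, h]

private lemma per_unif {f : ℝ → ℝ} (hf : Continuous f)
    (hper : Function.Periodic f (2 * Real.pi)) {e : ℝ} (he : 0 < e) :
    ∃ δ, 0 < δ ∧ δ ≤ 1 ∧ ∀ x y, |x - y| ≤ δ → |f x - f y| ≤ e := by
  have pi_pos := Real.pi_pos
  set K := Set.Icc (-(2 * Real.pi + 2)) (2 * Real.pi + 2) with hK
  obtain ⟨δ, hδ0, hδ⟩ := Metric.uniformContinuousOn_iff_le.mp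
    (isCompact_Icc.uniformContinuousOn_of_continuous hf.continuousOn) e he
  refine ⟨min δ 1, lt_min hδ0 one_pos, min_le_right _ _, fun x y hxy => ?_⟩
  set n : ℤ := ⌊x / (2 * Real.pi)⌋ with hn
  have h2π : (0:ℝ) < 2 * Real.pi := by positivity
  have hfl : (n:ℝ) ≤ x / (2 * Real.pi) := Int.floor_le _
  have hfl2 : x / (2 * Real.pi) < n + 1 := Int.lt_floor_add_one _
  have hx0 : 0 ≤ x - n * (2 * Real.pi) := by
    have := mul_le_mul_of_nonneg_right hfl h2π.le
    rw [div_mul_cancel₀ _ (by positivity : (2*Real.pi) ≠ 0)] at this; linarith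
  have hx1 : x - n * (2 * Real.pi) < 2 * Real.pi := by
    have := mul_lt_mul_of_pos_right hfl2 h2π
    rw [div_mul_cancel₀ _ (by positivity : (2*Real.pi) ≠ 0)] at this; nlinarith
  have hxK : x - n * (2 * Real.pi) ∈ K := by
    simp only [hK, Set.mem_Icc]
    constructor <;> nlinarith
  have hyK : y - n * (2 * Real.pi) ∈ K := by
    have h1 : |x - y| ≤ 1 := hxy.trans (min_le_right _ _)
    have h2 := abs_le.mp h1
    simp only [hK, Set.mem_Icc]
    constructor <;> nlinarith [h2.1, h2.2]
  have hdist : dist (x - n * (2 * Real.pi)) (y - n * (2 * Real.pi)) ≤ δ := by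
    rw [Real.dist_eq]
    have : x - n * (2 * Real.pi) - (y - n * (2 * Real.pi)) = x - y := by ring
    rw [this]; exact hxy.trans (min_le_left _ _)
  have := hδ _ hxK _ hyK hdist
  rw [Real.dist_eq, hper.sub_int_mul_eq, hper.sub_int_mul_eq] at this
  exact this

private lemma unpack2 {f : ℝ → ℝ} (hf : ContDiff ℝ 2 f) :
    Differentiable ℝ f ∧ Differentiable ℝ (deriv f) ∧ Continuous (deriv (deriv f)) := by
  rw [show (2 : WithTop ℕ∞) = 1 + 1 from by norm_num] at hf
  obtain ⟨h1, -, h2⟩ := contDiff_succ_iff_deriv.mp hf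
  obtain ⟨h3, h4⟩ := contDiff_one_iff_deriv.mp h2
  exact ⟨h1, h3, h4⟩

set_option maxHeartbeats 2000000 in
/-- Shape of the snaking curve: for `λ₂(L) = Z(Φ(L)) + ρ(L)` with `Z` having only nondegenerate
critical points, `Φ` a C² map with derivative bounded between positive constants, and `ρ`
exponentially small in C², for large `L` the derivative `λ₂'` has exactly one (nondegenerate)
zero near each point where `Z'∘Φ` vanishes, and no other zeros. -/
theorem stmt_10 (Z : ℝ → ℝ) (hZ : ContDiff ℝ 2 Z)
    (hZper : ∀ φ : ℝ, Z (φ + 2 * Real.pi) = Z φ)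
    (hZnd : ∀ φ : ℝ, deriv Z φ = 0 → deriv (deriv Z) φ ≠ 0)
    (c₁ c₂ K L₀ : ℝ) (hc₁ : 0 < c₁) (hc₁₂ : c₁ ≤ c₂) (hK : 0 < K)
    (Φ : ℝ → ℝ) (hΦ : ContDiff ℝ 2 Φ)
    (hΦ' : ∀ L ≥ L₀, c₁ ≤ deriv Φ L ∧ deriv Φ L ≤ c₂)
    (hΦ'' : ∀ L ≥ L₀, |deriv (deriv Φ) L| ≤ K)
    (η C : ℝ) (hη : 0 < η) (hC : 0 < C)
    (ρ : ℝ → ℝ) (hρsm : ContDiff ℝ 2 ρ)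
    (hρ : ∀ L ≥ L₀, |ρ L| ≤ C * Real.exp (-η * L) ∧
      |deriv ρ L| ≤ C * Real.exp (-η * L) ∧
      |deriv (deriv ρ) L| ≤ C * Real.exp (-η * L)) :
    ∃ L₁ ≥ L₀, ∃ ε > 0,
      (∀ Ls ≥ L₁, deriv Z (Φ Ls) = 0 →
        (∃! Lh : ℝ, Lh ∈ Set.Ioo (Ls - ε) (Ls + ε) ∧
          deriv (fun L => Z (Φ L) + ρ L) Lh = 0) ∧
        (∀ Lh ∈ Set.Ioo (Ls - ε) (Ls + ε),
          deriv (fun L => Z (Φ L) + ρ L) Lh = 0 →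
          deriv (deriv (fun L => Z (Φ L) + ρ L)) Lh ≠ 0)) ∧
      (∀ L ≥ L₁ + ε, deriv (fun L' => Z (Φ L') + ρ L') L = 0 →
        ∃ Ls : ℝ, deriv Z (Φ Ls) = 0 ∧ |L - Ls| ≤ ε) := by
  have pi_pos := Real.pi_pos
  obtain ⟨hZd, hZd1, hZc2⟩ := unpack2 hZ
  obtain ⟨hΦd, hΦd1, -⟩ := unpack2 hΦ
  obtain ⟨hρd, hρd1, -⟩ := unpack2 hρsm
  have hc₂ : 0 < c₂ := lt_of_lt_of_le hc₁ hc₁₂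
  -- periodicity of derivatives
  have hgper : Function.Periodic (deriv Z) (2 * Real.pi) := per_deriv hZper
  have hg'per : Function.Periodic (deriv (deriv Z)) (2 * Real.pi) := per_deriv hgper
  -- global bound M on |Z''|
  obtain ⟨yM, hyM⟩ := per_max (f := fun x => |deriv (deriv Z) x|) hZc2.abs
    (fun x => congrArg abs (hg'per x))
  obtain ⟨M, hM_def⟩ : ∃ x : ℝ, x = |deriv (deriv Z) yM| + 1 := ⟨_, rfl⟩
  have hM0 : 0 < M := by rw [hM_def]; positivity
  have hMb : ∀ x, |deriv (deriv Z) x| ≤ M := fun x =>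
    (hyM x).trans (by rw [hM_def]; linarith [abs_nonneg (deriv (deriv Z) yM)])
  -- minimum m of |Z'| + |Z''|
  obtain ⟨ym, hym⟩ := per_max (f := fun x => -(|deriv Z x| + |deriv (deriv Z) x|))
    ((hZd1.continuous.abs.add hZc2.abs).neg)
    (fun x => by simp only [hgper x, hg'per x])
  obtain ⟨m, hm_def⟩ : ∃ x : ℝ, x = |deriv Z ym| + |deriv (deriv Z) ym| := ⟨_, rfl⟩
  have hmlb : ∀ x, m ≤ |deriv Z x| + |deriv (deriv Z) x| := by
    intro x
    have h1 := hym x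
    simp only [neg_le_neg_iff] at h1
    rw [hm_def]
    linarith [h1]
  have hm0 : 0 < m := by
    rw [hm_def]
    by_cases h : deriv Z ym = 0
    · have h2 : 0 < |deriv (deriv Z) ym| := abs_pos.mpr (hZnd ym h)
      have := abs_nonneg (deriv Z ym); linarith
    · have h2 : 0 < |deriv Z ym| := abs_pos.mpr h
      have := abs_nonneg (deriv (deriv Z) ym); linarith
  -- uniform continuity of Z''
  obtain ⟨δ, hδ0, hδ1, hδ⟩ := per_unif hZc2 hg'per (by linarith : (0:ℝ) < m / 4)
  -- constants
  obtain ⟨ε, hε_def⟩ : ∃ x : ℝ,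
      x = min 1 (min (δ / c₂) (m * (c₁ * c₁) / (4 * M * c₂ * K))) := ⟨_, rfl⟩
  have hε0 : 0 < ε := by
    rw [hε_def]
    have h1 : 0 < m * (c₁ * c₁) / (4 * M * c₂ * K) :=
      div_pos (mul_pos hm0 (mul_pos hc₁ hc₁))
        (mul_pos (mul_pos (mul_pos (by norm_num : (0:ℝ) < 4) hM0) hc₂) hK)
    exact lt_min one_pos (lt_min (div_pos hδ0 hc₂) h1)
  have hε1 : ε ≤ 1 := by rw [hε_def]; exact min_le_left _ _
  have hεδ : c₂ * ε ≤ δ := by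
    have h1 : ε ≤ δ / c₂ := by
      rw [hε_def]; exact le_trans (min_le_right _ _) (min_le_left _ _)
    calc c₂ * ε ≤ c₂ * (δ / c₂) := mul_le_mul_of_nonneg_left h1 hc₂.le
      _ = δ := by rw [mul_comm, div_mul_cancel₀ _ (ne_of_gt hc₂)]
  have hεK : M * (c₂ * ε) * K ≤ m * (c₁ * c₁) / 4 := by
    have h1 : ε ≤ m * (c₁ * c₁) / (4 * M * c₂ * K) := by
      rw [hε_def]; exact le_trans (min_le_right _ _) (min_le_right _ _)
    have hM' : M ≠ 0 := ne_of_gt hM0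
    have hc₂' : c₂ ≠ 0 := ne_of_gt hc₂
    have hK' : K ≠ 0 := ne_of_gt hK
    calc M * (c₂ * ε) * K ≤ M * (c₂ * (m * (c₁ * c₁) / (4 * M * c₂ * K))) * K :=
          mul_le_mul_of_nonneg_right
            (mul_le_mul_of_nonneg_left (mul_le_mul_of_nonneg_left h1 hc₂.le) hM0.le) hK.le
      _ = m * (c₁ * c₁) / 4 := by field_simp
  obtain ⟨α, hα_def⟩ : ∃ x : ℝ, x = 3 * m * (c₁ * c₁) / 8 := ⟨_, rfl⟩
  have hα0 : 0 < α := by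
    rw [hα_def]
    exact div_pos (mul_pos (by linarith : (0:ℝ) < 3 * m) (mul_pos hc₁ hc₁)) (by norm_num)
  obtain ⟨b, hb_def⟩ : ∃ x : ℝ, x = m * (c₁ * ε) / 8 := ⟨_, rfl⟩
  have hb0 : 0 < b := by
    rw [hb_def]
    exact div_pos (mul_pos hm0 (mul_pos hc₁ hε0)) (by norm_num)
  obtain ⟨Emax, hE_def⟩ : ∃ x : ℝ,
      x = min (m * (c₁ * c₁) / 8) (min (α * ε / 4) (b * c₁)) := ⟨_, rfl⟩
  have hEmax0 : 0 < Emax := by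
    rw [hE_def]
    exact lt_min (div_pos (mul_pos hm0 (mul_pos hc₁ hc₁)) (by norm_num))
      (lt_min (div_pos (mul_pos hα0 hε0) (by norm_num)) (mul_pos hb0 hc₁))
  obtain ⟨L₁, hL₁_def⟩ : ∃ x : ℝ, x = max (L₀ + 1) (Real.log (C / Emax) / η + 1) := ⟨_, rfl⟩
  have hL₁L₀ : L₀ + 1 ≤ L₁ := by rw [hL₁_def]; exact le_max_left _ _
  have hE : ∀ L, L₁ - 1 ≤ L → C * Real.exp (-η * L) ≤ Emax := by
    intro L hL
    have hmax2 : Real.log (C / Emax) / η + 1 ≤ L₁ := by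
      rw [hL₁_def]; exact le_max_right _ _
    have h1 : Real.log (C / Emax) / η ≤ L := by linarith
    have h2 : Real.log (C / Emax) ≤ η * L := by
      rw [div_le_iff₀ hη] at h1; linarith
    have h3 : Real.exp (-η * L) ≤ Real.exp (-Real.log (C / Emax)) :=
      Real.exp_le_exp.mpr (by linarith)
    have h4 : Real.exp (-Real.log (C / Emax)) = Emax / C := by
      rw [Real.exp_neg, Real.exp_log (div_pos hC hEmax0)]
      field_simp
    calc C * Real.exp (-η * L) ≤ C * (Emax / C) := by
          have h5 : Real.exp (-η * L) ≤ Emax / C := h4 ▸ h3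
          exact mul_le_mul_of_nonneg_left h5 hC.le
      _ = Emax := by rw [mul_comm, div_mul_cancel₀ _ (ne_of_gt hC)]
  -- global Lipschitz bound for Z'
  have hglob : ∀ x y, x ≤ y → |deriv Z y - deriv Z x| ≤ M * (y - x) := by
    intro x y hxy
    have h1 := mvt_lower (f := deriv Z) (f' := deriv (deriv Z)) (α := -M)
      (fun t _ => (hZd1 t).hasDerivAt) (fun t _ => (abs_le.mp (hMb t)).1) hxy
    have h2 := mvt_upper (f := deriv Z) (f' := deriv (deriv Z)) (β := M)
      (fun t _ => (hZd1 t).hasDerivAt) (fun t _ => (abs_le.mp (hMb t)).2) hxy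
    rw [abs_le]; constructor <;> linarith
  -- MVT bounds for Φ
  have hΦmvt : ∀ x y, L₀ ≤ x → x ≤ y →
      c₁ * (y - x) ≤ Φ y - Φ x ∧ Φ y - Φ x ≤ c₂ * (y - x) := by
    intro x y hx hxy
    exact ⟨mvt_lower (fun t ht => (hΦd t).hasDerivAt)
        (fun t ht => (hΦ' t (hx.trans ht.1)).1) hxy,
      mvt_upper (fun t ht => (hΦd t).hasDerivAt)
        (fun t ht => (hΦ' t (hx.trans ht.1)).2) hxy⟩
  -- derivative formulas
  have hD1 : ∀ L, HasDerivAt (fun L => Z (Φ L) + ρ L)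
      (deriv Z (Φ L) * deriv Φ L + deriv ρ L) L := fun L =>
    ((hZd (Φ L)).hasDerivAt.comp L (hΦd L).hasDerivAt).add (hρd L).hasDerivAt
  have hd1 : deriv (fun L => Z (Φ L) + ρ L) =
      fun L => deriv Z (Φ L) * deriv Φ L + deriv ρ L :=
    funext fun L => (hD1 L).deriv
  have hD2 : ∀ L, HasDerivAt (fun L => deriv Z (Φ L) * deriv Φ L + deriv ρ L)
      (deriv (deriv Z) (Φ L) * deriv Φ L * deriv Φ L +
        deriv Z (Φ L) * deriv (deriv Φ) L + deriv (deriv ρ) L) L := fun L =>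
    (((hZd1 (Φ L)).hasDerivAt.comp L (hΦd L).hasDerivAt).mul
      (hΦd1 L).hasDerivAt).add (hρd1 L).hasDerivAt
  have hd2 : deriv (deriv (fun L => Z (Φ L) + ρ L)) = fun L =>
      deriv (deriv Z) (Φ L) * deriv Φ L * deriv Φ L +
        deriv Z (Φ L) * deriv (deriv Φ) L + deriv (deriv ρ) L := by
    rw [hd1]; exact funext fun L => (hD2 L).deriv
  refine ⟨L₁, by linarith, ε, hε0, ?_, ?_⟩
  · -- part (i)
    intro Ls hLs hcrit
    have hJ : ∀ L ∈ Set.Icc (Ls - ε) (Ls + ε), L₀ ≤ L ∧ L₁ - 1 ≤ L := by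
      intro L hL
      constructor <;> [linarith [hL.1]; linarith [hL.1]]
    -- sign
    obtain ⟨s, hs_def⟩ : ∃ x : ℝ,
        x = if 0 ≤ deriv (deriv Z) (Φ Ls) then 1 else -1 := ⟨_, rfl⟩
    have hs : s = 1 ∨ s = -1 := by
      by_cases h : 0 ≤ deriv (deriv Z) (Φ Ls) <;> simp [hs_def, h]
    have hs_abs : |s| = 1 := by rcases hs with h | h <;> simp [h]
    have hs0 : s ≠ 0 := by rcases hs with h | h <;> rw [h] <;> norm_num
    have hsg : s * deriv (deriv Z) (Φ Ls) = |deriv (deriv Z) (Φ Ls)| := by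
      by_cases h : 0 ≤ deriv (deriv Z) (Φ Ls)
      · rw [hs_def, if_pos h, one_mul, abs_of_nonneg h]
      · rw [hs_def, if_neg h, abs_of_neg (lt_of_not_ge h)]; ring
    have hgLs : m ≤ |deriv (deriv Z) (Φ Ls)| := by
      have h1 := hmlb (Φ Ls)
      rw [hcrit, abs_zero] at h1
      linarith
    -- Φ stays close
    have hΦclose : ∀ L ∈ Set.Icc (Ls - ε) (Ls + ε), |Φ L - Φ Ls| ≤ c₂ * ε := by
      intro L hL
      have h6 : 0 ≤ c₂ * ε := le_of_lt (mul_pos hc₂ hε0)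
      rcases le_total L Ls with h | h
      · have h2 := hΦmvt L Ls (hJ L hL).1 h
        have h3 : Ls - L ≤ ε := by linarith only [hL.1]
        have h4 : c₂ * (Ls - L) ≤ c₂ * ε := mul_le_mul_of_nonneg_left h3 hc₂.le
        have h5 : 0 ≤ c₁ * (Ls - L) := mul_nonneg hc₁.le (by linarith only [h])
        rw [abs_le]
        exact ⟨by linarith only [h2.2, h4], by linarith only [h2.1, h5, h6]⟩
      · have h2 := hΦmvt Ls L (by linarith only [hLs, hL₁L₀]) h
        have h3 : L - Ls ≤ ε := by linarith only [hL.2]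
        have h4 : c₂ * (L - Ls) ≤ c₂ * ε := mul_le_mul_of_nonneg_left h3 hc₂.le
        have h5 : 0 ≤ c₁ * (L - Ls) := mul_nonneg hc₁.le (by linarith only [h])
        rw [abs_le]
        exact ⟨by linarith only [h2.1, h5, h6], by linarith only [h2.2, h4]⟩
    -- second derivative of Z along interval
    have hg'J : ∀ L ∈ Set.Icc (Ls - ε) (Ls + ε),
        3 * m / 4 ≤ s * deriv (deriv Z) (Φ L) := by
      intro L hL
      have h1 : |Φ L - Φ Ls| ≤ δ := (hΦclose L hL).trans hεδ
      have h2 := hδ (Φ L) (Φ Ls) h1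
      have h3 : -(m / 4) ≤ s * (deriv (deriv Z) (Φ L) - deriv (deriv Z) (Φ Ls)) := by
        have h4 := neg_abs_le (s * (deriv (deriv Z) (Φ L) - deriv (deriv Z) (Φ Ls)))
        rw [abs_mul, hs_abs, one_mul] at h4
        linarith
      have h5 : s * deriv (deriv Z) (Φ L) - s * deriv (deriv Z) (Φ Ls) =
          s * (deriv (deriv Z) (Φ L) - deriv (deriv Z) (Φ Ls)) := by ring
      linarith [hsg ▸ hgLs, h5 ▸ h3]
    -- Z' small on interval
    have hgJ : ∀ L ∈ Set.Icc (Ls - ε) (Ls + ε), |deriv Z (Φ L)| ≤ M * (c₂ * ε) := by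
      intro L hL
      have h1 := hΦclose L hL
      have key : |deriv Z (Φ L) - deriv Z (Φ Ls)| ≤ M * |Φ L - Φ Ls| := by
        rcases le_total (Φ L) (Φ Ls) with h | h
        · have h2 := hglob (Φ L) (Φ Ls) h
          have habs : |Φ L - Φ Ls| = Φ Ls - Φ L := by
            rw [abs_sub_comm, abs_of_nonneg (by linarith)]
          rw [abs_sub_comm, habs]; exact h2
        · have h2 := hglob (Φ Ls) (Φ L) h
          have habs : |Φ L - Φ Ls| = Φ L - Φ Ls := abs_of_nonneg (by linarith)
          rw [habs]; exact h2
      rw [hcrit, sub_zero] at key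
      exact key.trans (mul_le_mul_of_nonneg_left h1 hM0.le)
    -- lower bound on s * λ₂''
    have hD2pos : ∀ L ∈ Set.Icc (Ls - ε) (Ls + ε),
        α ≤ s * (deriv (deriv Z) (Φ L) * deriv Φ L * deriv Φ L +
          deriv Z (Φ L) * deriv (deriv Φ) L + deriv (deriv ρ) L) := by
      intro L hL
      obtain ⟨hL0, hL1⟩ := hJ L hL
      have hP := hΦ' L hL0
      have hB := hΦ'' L hL0
      have hR : |deriv (deriv ρ) L| ≤ Emax := le_trans (hρ L hL0).2.2 (hE L hL1)
      have hA := hg'J L hL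
      have hG := hgJ L hL
      have hEm1 : Emax ≤ m * (c₁ * c₁) / 8 := by rw [hE_def]; exact min_le_left _ _
      have e1 : 3 * m / 4 * (c₁ * c₁) ≤
          (s * deriv (deriv Z) (Φ L)) * (deriv Φ L * deriv Φ L) := by
        have hP2 : c₁ * c₁ ≤ deriv Φ L * deriv Φ L :=
          mul_le_mul hP.1 hP.1 hc₁.le (hc₁.le.trans hP.1)
        have h0 : (0:ℝ) ≤ 3 * m / 4 := by linarith
        exact mul_le_mul hA hP2 (by positivity) (h0.trans hA)
      have e2 : -(m * (c₁ * c₁) / 4) ≤ s * (deriv Z (Φ L) * deriv (deriv Φ) L) := by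
        have h1 : |s * (deriv Z (Φ L) * deriv (deriv Φ) L)| ≤ M * (c₂ * ε) * K := by
          rw [abs_mul, hs_abs, one_mul, abs_mul]
          exact mul_le_mul hG hB (abs_nonneg _) (mul_pos hM0 (mul_pos hc₂ hε0)).le
        have h2 := neg_abs_le (s * (deriv Z (Φ L) * deriv (deriv Φ) L))
        linarith
      have e3 : -(m * (c₁ * c₁) / 8) ≤ s * deriv (deriv ρ) L := by
        have h1 := neg_abs_le (s * deriv (deriv ρ) L)
        rw [abs_mul, hs_abs, one_mul] at h1
        linarith
      have expand : s * (deriv (deriv Z) (Φ L) * deriv Φ L * deriv Φ L +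
          deriv Z (Φ L) * deriv (deriv Φ) L + deriv (deriv ρ) L) =
          (s * deriv (deriv Z) (Φ L)) * (deriv Φ L * deriv Φ L) +
          s * (deriv Z (Φ L) * deriv (deriv Φ) L) + s * deriv (deriv ρ) L := by ring
      rw [expand, hα_def]
      linarith
    -- F := s * λ₂' has positive slope α on J
    have hFd : ∀ L, HasDerivAt (fun L => s * (deriv Z (Φ L) * deriv Φ L + deriv ρ L))
        (s * (deriv (deriv Z) (Φ L) * deriv Φ L * deriv Φ L +
          deriv Z (Φ L) * deriv (deriv Φ) L + deriv (deriv ρ) L)) L :=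
      fun L => (hD2 L).const_mul s
    have hFLs : |s * (deriv Z (Φ Ls) * deriv Φ Ls + deriv ρ Ls)| ≤ α * ε / 4 := by
      rw [hcrit, zero_mul, zero_add, abs_mul, hs_abs, one_mul]
      have h1 : |deriv ρ Ls| ≤ Emax := le_trans (hρ Ls (by linarith)).2.1 (hE Ls (by linarith))
      have h2 : Emax ≤ α * ε / 4 := by
        rw [hE_def]; exact (min_le_right _ _).trans (min_le_left _ _)
      exact h1.trans h2
    have hFgrow : ∀ x y, x ∈ Set.Icc (Ls - ε) (Ls + ε) → y ∈ Set.Icc (Ls - ε) (Ls + ε) →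
        x ≤ y → α * (y - x) ≤ s * (deriv Z (Φ y) * deriv Φ y + deriv ρ y) -
          s * (deriv Z (Φ x) * deriv Φ x + deriv ρ x) := by
      intro x y hx hy hxy
      have hsub : Set.Icc x y ⊆ Set.Icc (Ls - ε) (Ls + ε) :=
        Set.Icc_subset_Icc hx.1 hy.2
      exact mvt_lower (fun t ht => hFd t) (fun t ht => hD2pos t (hsub ht)) hxy
    have habs := abs_le.mp hFLs
    have hmem1 : Ls ∈ Set.Icc (Ls - ε) (Ls + ε) := by
      constructor <;> linarith
    have hmem2 : Ls + ε / 2 ∈ Set.Icc (Ls - ε) (Ls + ε) := by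
      constructor <;> linarith
    have hmem3 : Ls - ε / 2 ∈ Set.Icc (Ls - ε) (Ls + ε) := by
      constructor <;> linarith
    have hplus : 0 < s * (deriv Z (Φ (Ls + ε / 2)) * deriv Φ (Ls + ε / 2) + deriv ρ (Ls + ε / 2)) := by
      have h1 := hFgrow Ls (Ls + ε / 2) hmem1 hmem2 (by linarith)
      have h2 : α * (Ls + ε / 2 - Ls) = α * ε / 2 := by ring
      rw [h2] at h1
      linarith [habs.1, mul_pos hα0 hε0]
    have hminus : s * (deriv Z (Φ (Ls - ε / 2)) * deriv Φ (Ls - ε / 2) + deriv ρ (Ls - ε / 2)) < 0 := by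
      have h1 := hFgrow (Ls - ε / 2) Ls hmem3 hmem1 (by linarith)
      have h2 : α * (Ls - (Ls - ε / 2)) = α * ε / 2 := by ring
      rw [h2] at h1
      linarith [habs.2, mul_pos hα0 hε0]
    have hcontF : ContinuousOn (fun L => s * (deriv Z (Φ L) * deriv Φ L + deriv ρ L))
        (Set.Icc (Ls - ε / 2) (Ls + ε / 2)) :=
      fun t _ => (hFd t).continuousAt.continuousWithinAt
    obtain ⟨Lh, hLhmem, hLh0⟩ := intermediate_value_Ioo (by linarith : Ls - ε / 2 ≤ Ls + ε / 2)
      hcontF (Set.mem_Ioo.mpr ⟨hminus, hplus⟩)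
    have hLhIoo : Lh ∈ Set.Ioo (Ls - ε) (Ls + ε) := by
      obtain ⟨h1, h2⟩ := hLhmem
      constructor <;> linarith
    have hLhzero : deriv (fun L => Z (Φ L) + ρ L) Lh = 0 := by
      rw [hd1]
      have := mul_eq_zero.mp hLh0
      tauto
    -- uniqueness helper
    have huniq : ∀ y ∈ Set.Ioo (Ls - ε) (Ls + ε),
        deriv (fun L => Z (Φ L) + ρ L) y = 0 → y = Lh := by
      intro y hy hy0
      have hy0' : s * (deriv Z (Φ y) * deriv Φ y + deriv ρ y) = 0 := by
        rw [hd1] at hy0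
        simp only at hy0
        rw [hy0, mul_zero]
      have hLh0' : s * (deriv Z (Φ Lh) * deriv Φ Lh + deriv ρ Lh) = 0 := hLh0
      have hyIcc : y ∈ Set.Icc (Ls - ε) (Ls + ε) := ⟨hy.1.le, hy.2.le⟩
      have hLhIcc : Lh ∈ Set.Icc (Ls - ε) (Ls + ε) := ⟨hLhIoo.1.le, hLhIoo.2.le⟩
      rcases le_total y Lh with h | h
      · have h6 := hFgrow y Lh hyIcc hLhIcc h
        rw [hy0', hLh0'] at h6
        have h7 : α * (Lh - y) ≤ 0 := by linarith only [h6]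
        have h8 : Lh ≤ y := by nlinarith only [h7, hα0]
        exact le_antisymm h h8
      · have h6 := hFgrow Lh y hLhIcc hyIcc h
        rw [hy0', hLh0'] at h6
        have h7 : α * (y - Lh) ≤ 0 := by linarith only [h6]
        have h8 : y ≤ Lh := by nlinarith only [h7, hα0]
        exact le_antisymm h8 h
    refine ⟨⟨Lh, ⟨hLhIoo, hLhzero⟩, fun y hy => huniq y hy.1 hy.2⟩, ?_⟩
    -- nondegeneracy
    intro Lh' hmem' _
    rw [hd2]
    simp only
    intro h0
    have h1 := hD2pos Lh' ⟨hmem'.1.le, hmem'.2.le⟩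
    rw [h0, mul_zero] at h1
    linarith
  · -- part (ii)
    intro L hL hzero
    simp only [hd1] at hzero
    have hL0 : L₀ ≤ L := by linarith
    have hP := hΦ' L hL0
    have hΦpos : 0 < deriv Φ L := lt_of_lt_of_le hc₁ hP.1
    have hρ'b : |deriv ρ L| ≤ Emax := le_trans (hρ L hL0).2.1 (hE L (by linarith))
    have hEb : Emax ≤ b * c₁ := by
      rw [hE_def]; exact (min_le_right _ _).trans (min_le_right _ _)
    have hgL : |deriv Z (Φ L)| ≤ b := by
      have h1 : deriv Z (Φ L) * deriv Φ L = -deriv ρ L := by linarith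
      have h2 : |deriv Z (Φ L)| * deriv Φ L ≤ b * c₁ := by
        calc |deriv Z (Φ L)| * deriv Φ L = |deriv Z (Φ L) * deriv Φ L| := by
              rw [abs_mul, abs_of_pos hΦpos]
          _ = |deriv ρ L| := by rw [h1, abs_neg]
          _ ≤ b * c₁ := hρ'b.trans hEb
      have h3 : |deriv Z (Φ L)| * c₁ ≤ b * c₁ :=
        le_trans (mul_le_mul_of_nonneg_left hP.1 (abs_nonneg _)) h2
      exact le_of_mul_le_mul_right h3 hc₁
    have hδ'0 : 0 < c₁ * ε := mul_pos hc₁ hε0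
    have hδ'δ : c₁ * ε ≤ δ := le_trans (mul_le_mul_of_nonneg_right hc₁₂ hε0.le) hεδ
    have hδ'1 : c₁ * ε ≤ 1 := hδ'δ.trans hδ1
    have hb_eq : b = m * (c₁ * ε) / 8 := hb_def
    have hb8 : b ≤ m / 8 := by
      rw [hb_eq]
      have h1 := mul_le_mul_of_nonneg_left hδ'1 hm0.le
      linarith only [h1]
    have hg'φ : 7 * m / 8 ≤ |deriv (deriv Z) (Φ L)| := by
      have h1 := hmlb (Φ L)
      linarith
    obtain ⟨s', hs'_def⟩ : ∃ x : ℝ,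
        x = if 0 ≤ deriv (deriv Z) (Φ L) then 1 else -1 := ⟨_, rfl⟩
    have hs' : s' = 1 ∨ s' = -1 := by
      by_cases h : 0 ≤ deriv (deriv Z) (Φ L) <;> simp [hs'_def, h]
    have hs'_abs : |s'| = 1 := by rcases hs' with h | h <;> simp [h]
    have hs'0 : s' ≠ 0 := by rcases hs' with h | h <;> rw [h] <;> norm_num
    have hs'g : s' * deriv (deriv Z) (Φ L) = |deriv (deriv Z) (Φ L)| := by
      by_cases h : 0 ≤ deriv (deriv Z) (Φ L)
      · rw [hs'_def, if_pos h, one_mul, abs_of_nonneg h]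
      · rw [hs'_def, if_neg h, abs_of_neg (lt_of_not_ge h)]; ring
    have hg'near : ∀ ψ ∈ Set.Icc (Φ L - c₁ * ε) (Φ L + c₁ * ε),
        m / 2 ≤ s' * deriv (deriv Z) ψ := by
      intro ψ hψ
      have h1 : |ψ - Φ L| ≤ δ := by
        rw [abs_le]; constructor <;> [linarith [hψ.1]; linarith [hψ.2]]
      have h2 := hδ ψ (Φ L) h1
      have h3 : -(m / 4) ≤ s' * (deriv (deriv Z) ψ - deriv (deriv Z) (Φ L)) := by
        have h4 := neg_abs_le (s' * (deriv (deriv Z) ψ - deriv (deriv Z) (Φ L)))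
        rw [abs_mul, hs'_abs, one_mul] at h4
        linarith
      have h5 : s' * deriv (deriv Z) ψ - s' * deriv (deriv Z) (Φ L) =
          s' * (deriv (deriv Z) ψ - deriv (deriv Z) (Φ L)) := by ring
      linarith [hs'g ▸ hg'φ, h5 ▸ h3]
    have hGd : ∀ ψ, HasDerivAt (fun ψ => s' * deriv Z ψ) (s' * deriv (deriv Z) ψ) ψ :=
      fun ψ => ((hZd1 ψ).hasDerivAt).const_mul s'
    have hGφ := abs_le.mp (by rw [abs_mul, hs'_abs, one_mul]; exact hgL :
      |s' * deriv Z (Φ L)| ≤ b)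
    have hplus : 0 < s' * deriv Z (Φ L + c₁ * ε) := by
      have h1 := mvt_lower (f := fun ψ => s' * deriv Z ψ) (f' := fun ψ => s' * deriv (deriv Z) ψ)
        (α := m / 2) (fun t _ => hGd t)
        (fun t ht => hg'near t ⟨by linarith [ht.1], ht.2⟩) (by linarith : Φ L ≤ Φ L + c₁ * ε)
      have h2 : m / 2 * (Φ L + c₁ * ε - Φ L) = m * (c₁ * ε) / 2 := by ring
      rw [h2] at h1
      have h3 := hGφ.1
      rw [hb_eq] at h3
      linarith only [h1, h3, mul_pos hm0 hδ'0]
    have hminus : s' * deriv Z (Φ L - c₁ * ε) < 0 := by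
      have h1 := mvt_lower (f := fun ψ => s' * deriv Z ψ) (f' := fun ψ => s' * deriv (deriv Z) ψ)
        (α := m / 2) (fun t _ => hGd t)
        (fun t ht => hg'near t ⟨ht.1, by linarith [ht.2]⟩) (by linarith : Φ L - c₁ * ε ≤ Φ L)
      have h2 : m / 2 * (Φ L - (Φ L - c₁ * ε)) = m * (c₁ * ε) / 2 := by ring
      rw [h2] at h1
      have h3 := hGφ.2
      rw [hb_eq] at h3
      linarith only [h1, h3, mul_pos hm0 hδ'0]
    have hcontG : ContinuousOn (fun ψ => s' * deriv Z ψ)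
        (Set.Icc (Φ L - c₁ * ε) (Φ L + c₁ * ε)) :=
      fun t _ => (hGd t).continuousAt.continuousWithinAt
    obtain ⟨ψ, hψmem, hψ0⟩ := intermediate_value_Ioo
      (by linarith : Φ L - c₁ * ε ≤ Φ L + c₁ * ε) hcontG (Set.mem_Ioo.mpr ⟨hminus, hplus⟩)
    have hgψ : deriv Z ψ = 0 := by
      rcases mul_eq_zero.mp hψ0 with h | h
      · exact absurd h hs'0
      · exact h
    have h1 : Φ (L - ε) ≤ ψ := by
      have h2 := (hΦmvt (L - ε) L (by linarith) (by linarith)).1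
      have h3 : c₁ * (L - (L - ε)) = c₁ * ε := by ring
      rw [h3] at h2
      linarith [hψmem.1]
    have h2 : ψ ≤ Φ (L + ε) := by
      have h3 := (hΦmvt L (L + ε) hL0 (by linarith)).1
      have h4 : c₁ * (L + ε - L) = c₁ * ε := by ring
      rw [h4] at h3
      linarith [hψmem.2]
    obtain ⟨Lsol, hLsol, hΦLsol⟩ := intermediate_value_Icc
      (by linarith : L - ε ≤ L + ε) hΦd.continuous.continuousOn
      (Set.mem_Icc.mpr ⟨h1, h2⟩)
    exact ⟨Lsol, by rw [hΦLsol]; exact hgψ,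
      abs_le.mpr ⟨by linarith [hLsol.2], by linarith [hLsol.1]⟩⟩
end
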